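/- arXiv:2501.13640 — 8 statements merged into one kernel-verified Lean document; each statement's English description precedes it below -/
import Mathlib

section
/- Let n be a positive integer such that for every prime q with q ≡ 2 (mod 3) the exponent of q in the prime factorization of n is even. Then the set {(a,b) : a, b positive integers, a² + a·b + b² = n} is finite, and its cardinality equals ∏_p (e_p + 1) − 1 if n is a perfect square, and ∏_p (e_p + 1) otherwise, where the product ranges over all primes p dividing n with p ≡ 1 (mod 3) and e_p denotes the exponent of p in n. -/
namespace EisCount

/-- Eisenstein-like integers `a + b ω` with `ω² = -1 - ω`. -/
@[ext]
structure Eis where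
  re : ℤ
  im : ℤ
  deriving DecidableEq

namespace Eis

instance : Zero Eis := ⟨⟨0, 0⟩⟩
instance : One Eis := ⟨⟨1, 0⟩⟩
instance : Add Eis := ⟨fun z w => ⟨z.re + w.re, z.im + w.im⟩⟩
instance : Neg Eis := ⟨fun z => ⟨-z.re, -z.im⟩⟩
instance : Mul Eis :=
  ⟨fun z w => ⟨z.re * w.re - z.im * w.im, z.re * w.im + z.im * w.re - z.im * w.im⟩⟩

@[simp] theorem zero_re : (0 : Eis).re = 0 := rfl
@[simp] theorem zero_im : (0 : Eis).im = 0 := rfl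
@[simp] theorem one_re : (1 : Eis).re = 1 := rfl
@[simp] theorem one_im : (1 : Eis).im = 0 := rfl
@[simp] theorem add_re (z w : Eis) : (z + w).re = z.re + w.re := rfl
@[simp] theorem add_im (z w : Eis) : (z + w).im = z.im + w.im := rfl
@[simp] theorem neg_re (z : Eis) : (-z).re = -z.re := rfl
@[simp] theorem neg_im (z : Eis) : (-z).im = -z.im := rfl
@[simp] theorem mul_re (z w : Eis) : (z * w).re = z.re * w.re - z.im * w.im := rfl
@[simp] theorem mul_im (z w : Eis) :
    (z * w).im = z.re * w.im + z.im * w.re - z.im * w.im := rfl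

instance addCommGroup : AddCommGroup Eis := by
  refine
  { add := (· + ·)
    zero := (0 : Eis)
    sub := fun a b => a + -b
    neg := Neg.neg
    nsmul := @nsmulRec Eis ⟨0⟩ ⟨(· + ·)⟩
    zsmul := @zsmulRec Eis ⟨0⟩ ⟨(· + ·)⟩ ⟨Neg.neg⟩ (@nsmulRec Eis ⟨0⟩ ⟨(· + ·)⟩)
    add_assoc := ?_
    zero_add := ?_
    add_zero := ?_
    neg_add_cancel := ?_
    add_comm := ?_ } <;>
  intros <;>
  ext <;>
  simp [add_comm, add_left_comm]

@[simp] theorem sub_re (z w : Eis) : (z - w).re = z.re - w.re := rfl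
@[simp] theorem sub_im (z w : Eis) : (z - w).im = z.im - w.im := rfl

instance addGroupWithOne : AddGroupWithOne Eis :=
  { Eis.addCommGroup with
    natCast := fun n => ⟨n, 0⟩
    intCast := fun n => ⟨n, 0⟩
    one := 1 }

instance commRing : CommRing Eis := by
  refine
  { Eis.addGroupWithOne with
    mul := (· * ·)
    npow := @npowRec Eis ⟨1⟩ ⟨(· * ·)⟩,
    add_comm := ?_
    left_distrib := ?_
    right_distrib := ?_
    zero_mul := ?_
    mul_zero := ?_
    mul_assoc := ?_
    one_mul := ?_
    mul_one := ?_
    mul_comm := ?_ } <;>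
  intros <;>
  ext <;>
  simp <;>
  ring

@[simp] theorem intCast_re (n : ℤ) : (n : Eis).re = n := rfl
@[simp] theorem intCast_im (n : ℤ) : (n : Eis).im = 0 := rfl
@[simp] theorem natCast_re (n : ℕ) : (n : Eis).re = n := rfl
@[simp] theorem natCast_im (n : ℕ) : (n : Eis).im = 0 := rfl

/-- conjugation -/
def conj (z : Eis) : Eis := ⟨z.re - z.im, -z.im⟩

@[simp] theorem conj_re (z : Eis) : (conj z).re = z.re - z.im := rfl
@[simp] theorem conj_im (z : Eis) : (conj z).im = -z.im := rfl

theorem conj_mul (z w : Eis) : conj (z * w) = conj z * conj w := by ext <;> simp <;> ring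

/-- the norm -/
def N (z : Eis) : ℤ := z.re ^ 2 - z.re * z.im + z.im ^ 2

theorem N_mul (z w : Eis) : N (z * w) = N z * N w := by
  simp only [N, mul_re, mul_im]; ring

theorem mul_conj (z : Eis) : z * conj z = (N z : Eis) := by
  ext <;> simp only [mul_re, mul_im, conj_re, conj_im, intCast_re, intCast_im, N] <;> ring

theorem N_nonneg (z : Eis) : 0 ≤ N z := by
  unfold N; nlinarith [sq_nonneg (2 * z.re - z.im), sq_nonneg z.im]

theorem N_eq_zero_iff {z : Eis} : N z = 0 ↔ z = 0 := by
  constructor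
  · intro hz
    have h1 : (2 * z.re - z.im) ^ 2 + 3 * z.im ^ 2 = 4 * N z := by unfold N; ring
    rw [hz] at h1
    have h2 := sq_nonneg (2 * z.re - z.im)
    have h3 := sq_nonneg z.im
    have : z.im = 0 := by nlinarith
    have : z.re = 0 := by simp [this] at h1; nlinarith
    ext <;> simp [*]
  · rintro rfl; simp [N]

theorem N_one : N 1 = 1 := by simp [N]

instance : Nontrivial Eis := ⟨⟨0, 1, by decide⟩⟩

instance : NoZeroDivisors Eis := by
  constructor
  intro a b hab
  by_contra hc
  push_neg at hc
  have : N a * N b = 0 := by rw [← N_mul, hab]; unfold N; simp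
  rcases mul_eq_zero.1 this with h | h
  · exact hc.1 (N_eq_zero_iff.1 h)
  · exact hc.2 (N_eq_zero_iff.1 h)

instance : IsDomain Eis := NoZeroDivisors.to_isDomain _

end Eis
end EisCount

namespace EisCount
namespace Eis

theorem N_conj (z : Eis) : N (conj z) = N z := by simp only [N, conj_re, conj_im]; ring

theorem N_pos {z : Eis} (hz : z ≠ 0) : 0 < N z :=
  lt_of_le_of_ne (N_nonneg z) (fun h => hz (N_eq_zero_iff.1 h.symm))

instance : Div Eis :=
  ⟨fun x y =>
    ⟨round ((((x * conj y).re : ℤ) : ℚ) / ((N y : ℤ) : ℚ)),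
     round ((((x * conj y).im : ℤ) : ℚ) / ((N y : ℤ) : ℚ))⟩⟩

theorem div_def (x y : Eis) :
    x / y = ⟨round ((((x * conj y).re : ℤ) : ℚ) / ((N y : ℤ) : ℚ)),
     round ((((x * conj y).im : ℤ) : ℚ) / ((N y : ℤ) : ℚ))⟩ := rfl

instance : Mod Eis := ⟨fun x y => x - y * (x / y)⟩

theorem mod_def (x y : Eis) : x % y = x - y * (x / y) := rfl

theorem round_bound (A M : ℤ) (hM : 0 < M) :
    2 * |A - round ((A : ℚ) / (M : ℚ)) * M| ≤ M := by
  have hM' : (0 : ℚ) < (M : ℚ) := by exact_mod_cast hM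
  set r : ℤ := round ((A : ℚ) / (M : ℚ)) with hr
  have h := abs_sub_round ((A : ℚ) / (M : ℚ))
  have e : ((A : ℚ) - r * M) = ((A : ℚ) / M - r) * M := by field_simp
  have key : |(A : ℚ) - r * M| ≤ (M : ℚ) / 2 := by
    rw [e, abs_mul, abs_of_pos hM']
    calc |(A : ℚ) / M - r| * M ≤ 1 / 2 * M := mul_le_mul_of_nonneg_right h hM'.le
      _ = (M : ℚ) / 2 := by ring
  have h2 : (2 : ℚ) * |((A - r * M : ℤ) : ℚ)| ≤ ((M : ℤ) : ℚ) := by push_cast; push_cast at key; linarith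
  exact_mod_cast h2

theorem norm_mod_lt (x : Eis) {y : Eis} (hy : y ≠ 0) : N (x % y) < N y := by
  have hM : 0 < N y := N_pos hy
  obtain ⟨A, B, hAB⟩ : ∃ A B, x * conj y = ⟨A, B⟩ := ⟨_, _, rfl⟩
  have hq : x / y = ⟨round ((A : ℚ) / ((N y : ℤ) : ℚ)), round ((B : ℚ) / ((N y : ℤ) : ℚ))⟩ := by
    rw [div_def, hAB]
  have key : (x % y) * conj y =
      ⟨A - (x / y).re * N y, B - (x / y).im * N y⟩ := by
    have h0 : (x % y) * conj y = x * conj y - (x / y) * (y * conj y) := by rw [mod_def]; ring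
    rw [h0, mul_conj, hAB]
    ext <;> simp <;> ring
  have ha : 2 * |A - (x / y).re * N y| ≤ N y := by
    rw [hq]; exact round_bound A (N y) hM
  have hb : 2 * |B - (x / y).im * N y| ≤ N y := by
    rw [hq]; exact round_bound B (N y) hM
  set a := A - (x / y).re * N y with hadef
  set b := B - (x / y).im * N y with hbdef
  set M := N y with hMdef
  have hnorm : N (x % y) * M = a ^ 2 - a * b + b ^ 2 := by
    have h1 : N ((x % y) * conj y) = N (x % y) * M := by rw [N_mul, N_conj]
    rw [← h1, key]; simp [N]
  have habs : a ^ 2 - a * b + b ^ 2 < M * M := by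
    nlinarith [sq_abs a, sq_abs b, abs_mul a b, neg_abs_le (a * b), abs_nonneg a, abs_nonneg b,
      mul_le_mul ha hb (by positivity) (by linarith [abs_nonneg a])]
  have : N (x % y) * M < M * M := by rw [hnorm]; exact habs
  exact lt_of_mul_lt_mul_right this (le_of_lt hM)

theorem natAbs_norm_mod_lt (x : Eis) {y : Eis} (hy : y ≠ 0) :
    (N (x % y)).natAbs < (N y).natAbs := by
  have := norm_mod_lt x hy
  have h1 := N_nonneg (x % y)
  have h2 := N_nonneg y
  omega

instance : EuclideanDomain Eis :=
  { Eis.commRing, (inferInstance : Nontrivial Eis) with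
    quotient := (· / ·)
    remainder := (· % ·)
    quotient_zero := fun x => by ext <;> simp [div_def, N, conj]
    quotient_mul_add_remainder_eq := fun x y => by
      show y * (x / y) + (x - y * (x / y)) = x; ring
    r := fun a b => (N a).natAbs < (N b).natAbs
    r_wellFounded := (measure fun z : Eis => (N z).natAbs).wf
    remainder_lt := fun x y hy => natAbs_norm_mod_lt x hy
    mul_left_not_lt := fun a b hb0 => by
      rw [not_lt]
      show (N a).natAbs ≤ (N (a * b)).natAbs
      rw [N_mul, Int.natAbs_mul]
      exact Nat.le_mul_of_pos_right _ (Int.natAbs_pos.2 fun h => hb0 (N_eq_zero_iff.1 h)) }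

end Eis
end EisCount
namespace EisCount
namespace Eis

theorem isUnit_iff_N {z : Eis} : IsUnit z ↔ N z = 1 := by
  constructor
  · rintro ⟨u, rfl⟩
    have h : N (u : Eis) * N ((u⁻¹ : Eisˣ) : Eis) = 1 := by
      rw [← N_mul]
      simp [N_one]
    have h1 := N_nonneg (u : Eis)
    have h2 := N_nonneg ((u⁻¹ : Eisˣ) : Eis)
    exact Int.eq_one_of_mul_eq_one_right h1 h
  · intro hz
    refine IsUnit.of_mul_eq_one (a := z) (conj z) ?_
    rw [mul_conj, hz]; rfl

/-- the six-element "orbit" relation in coordinates -/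
def orb (z w : Eis) : Prop :=
  (w.re = z.re ∧ w.im = z.im) ∨ (w.re = -z.re ∧ w.im = -z.im) ∨
  (w.re = -z.im ∧ w.im = z.re - z.im) ∨ (w.re = z.im ∧ w.im = z.im - z.re) ∨
  (w.re = z.re - z.im ∧ w.im = z.re) ∨ (w.re = z.im - z.re ∧ w.im = -z.re)

theorem unit_cases {u : Eis} (hu : N u = 1) :
    (u.re = 1 ∧ u.im = 0) ∨ (u.re = -1 ∧ u.im = 0) ∨ (u.re = 0 ∧ u.im = 1) ∨
    (u.re = 0 ∧ u.im = -1) ∨ (u.re = 1 ∧ u.im = 1) ∨ (u.re = -1 ∧ u.im = -1) := by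
  have h4 : (2 * u.re - u.im) ^ 2 + 3 * u.im ^ 2 = 4 := by
    have : N u = u.re ^ 2 - u.re * u.im + u.im ^ 2 := rfl
    nlinarith [this, hu]
  have hb0 : u.im ^ 2 ≤ 1 := by nlinarith [sq_nonneg (2 * u.re - u.im)]
  have hb1 : -1 ≤ u.im := by nlinarith [sq_nonneg (u.im + 1)]
  have hb2 : u.im ≤ 1 := by nlinarith [sq_nonneg (u.im - 1)]
  have hb : u.im = -1 ∨ u.im = 0 ∨ u.im = 1 := by omega
  rcases hb with hb | hb | hb
  · have : (2 * u.re + 1) ^ 2 = 1 := by rw [hb] at h4; nlinarith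
    have h5 : (2 * u.re + 1 - 1) * (2 * u.re + 1 + 1) = 0 := by nlinarith
    rcases mul_eq_zero.1 h5 with h | h
    · omega
    · omega
  · have : (2 * u.re) ^ 2 = 4 := by rw [hb] at h4; nlinarith
    have h5 : (2 * u.re - 2) * (2 * u.re + 2) = 0 := by nlinarith
    rcases mul_eq_zero.1 h5 with h | h
    · omega
    · omega
  · have : (2 * u.re - 1) ^ 2 = 1 := by rw [hb] at h4; nlinarith
    have h5 : (2 * u.re - 1 - 1) * (2 * u.re - 1 + 1) = 0 := by nlinarith
    rcases mul_eq_zero.1 h5 with h | h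
    · omega
    · omega

theorem associated_of_unit_mul {u : Eis} (h : IsUnit u) (z : Eis) : Associated z (u * z) :=
  ⟨h.unit, by rw [IsUnit.unit_spec, mul_comm]⟩

theorem associated_iff_orb {z w : Eis} : Associated z w ↔ orb z w := by
  constructor
  · rintro ⟨u, rfl⟩
    have hu : N (u : Eis) = 1 := isUnit_iff_N.1 u.isUnit
    rcases unit_cases hu with ⟨h1, h2⟩ | ⟨h1, h2⟩ | ⟨h1, h2⟩ | ⟨h1, h2⟩ | ⟨h1, h2⟩ | ⟨h1, h2⟩ <;>
      unfold orb <;> simp [mul_re, mul_im, h1, h2] <;> omega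
  · intro ho
    have key : ∀ u : Eis, IsUnit u → w = u * z → Associated z w := by
      rintro u hu rfl; exact associated_of_unit_mul hu z
    rcases ho with ⟨h1, h2⟩ | ⟨h1, h2⟩ | ⟨h1, h2⟩ | ⟨h1, h2⟩ | ⟨h1, h2⟩ | ⟨h1, h2⟩
    · exact key 1 isUnit_one (by ext <;> simp [h1, h2])
    · exact key (-1) (IsUnit.neg isUnit_one) (by ext <;> simp [h1, h2])
    · exact key ⟨0, 1⟩ (isUnit_iff_N.2 (by simp [N])) (by ext <;> simp [h1, h2] <;> ring)
    · exact key ⟨0, -1⟩ (isUnit_iff_N.2 (by simp [N])) (by ext <;> simp [h1, h2] <;> ring)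
    · exact key ⟨1, 1⟩ (isUnit_iff_N.2 (by simp [N])) (by ext <;> simp [h1, h2] <;> ring)
    · exact key ⟨-1, -1⟩ (isUnit_iff_N.2 (by simp [N])) (by ext <;> simp [h1, h2] <;> ring)

/-- primary: unique representative in each orbit, in the sextant `0 ≤ im < re`. -/
def Pr (z : Eis) : Prop := 0 ≤ z.im ∧ z.im < z.re

theorem Pr.ne_zero {z : Eis} (h : Pr z) : z ≠ 0 := by
  intro hz
  rw [hz] at h
  exact absurd h (by simp [Pr])

theorem exists_pr {z : Eis} (hz : z ≠ 0) : ∃ w, Pr w ∧ Associated z w := by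
  have hz' : ¬(z.re = 0 ∧ z.im = 0) := fun ⟨h1, h2⟩ => hz (by ext <;> simp [h1, h2])
  set a := z.re
  set b := z.im
  have six : (0 ≤ b ∧ b < a) ∨ (0 ≤ -b ∧ -b < -a) ∨ (0 ≤ a - b ∧ a - b < -b) ∨
      (0 ≤ b - a ∧ b - a < b) ∨ (0 ≤ a ∧ a < a - b) ∨ (0 ≤ -a ∧ -a < b - a) := by omega
  rcases six with h | h | h | h | h | h
  · exact ⟨z, ⟨h.1, h.2⟩, Associated.refl z⟩
  · exact ⟨⟨-a, -b⟩, ⟨h.1, h.2⟩, associated_iff_orb.2 (by unfold orb; simp [a, b])⟩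
  · exact ⟨⟨-b, a - b⟩, ⟨h.1, h.2⟩, associated_iff_orb.2 (by unfold orb; simp [a, b])⟩
  · exact ⟨⟨b, b - a⟩, ⟨h.1, h.2⟩, associated_iff_orb.2 (by unfold orb; simp [a, b])⟩
  · exact ⟨⟨a - b, a⟩, ⟨h.1, h.2⟩, associated_iff_orb.2 (by unfold orb; simp [a, b])⟩
  · exact ⟨⟨b - a, -a⟩, ⟨h.1, h.2⟩, associated_iff_orb.2 (by unfold orb; simp [a, b])⟩

theorem pr_unique {z w : Eis} (hz : Pr z) (hw : Pr w) (h : Associated z w) : z = w := by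
  have ho := associated_iff_orb.1 h
  obtain ⟨h1, h2⟩ := hz
  obtain ⟨h3, h4⟩ := hw
  unfold orb at ho
  ext <;> omega

/-- the primary associate -/
noncomputable def pA (z : Eis) : Eis :=
  if h : z = 0 then 0 else Classical.choose (exists_pr h)

theorem pA_pr {z : Eis} (hz : z ≠ 0) : Pr (pA z) := by
  rw [pA, dif_neg hz]; exact (Classical.choose_spec (exists_pr hz)).1

theorem pA_assoc {z : Eis} (hz : z ≠ 0) : Associated z (pA z) := by
  rw [pA, dif_neg hz]; exact (Classical.choose_spec (exists_pr hz)).2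

theorem pA_eq {z w : Eis} (hw : Pr w) (h : Associated z w) : pA z = w := by
  have hz : z ≠ 0 := by
    rintro rfl
    exact (hw.ne_zero ((associated_zero_iff_eq_zero w).1 h.symm)).elim
  exact pr_unique (pA_pr hz) hw ((pA_assoc hz).symm.trans h)

theorem pA_self {z : Eis} (hz : Pr z) : pA z = z := pA_eq hz (Associated.refl z)

end Eis
end EisCount
namespace EisCount
namespace Eis

/-- the natural-number norm -/
def Nn (z : Eis) : ℕ := (N z).natAbs

theorem coe_Nn (z : Eis) : (Nn z : ℤ) = N z := Int.natAbs_of_nonneg (N_nonneg z)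

theorem Nn_mul (z w : Eis) : Nn (z * w) = Nn z * Nn w := by
  unfold Nn; rw [N_mul, Int.natAbs_mul]

theorem Nn_eq_zero_iff {z : Eis} : Nn z = 0 ↔ z = 0 := by
  unfold Nn
  rw [Int.natAbs_eq_zero, N_eq_zero_iff]

theorem Nn_conj (z : Eis) : Nn (conj z) = Nn z := by unfold Nn; rw [N_conj]

theorem Nn_one : Nn 1 = 1 := by unfold Nn; rw [N_one]; rfl

theorem isUnit_iff_Nn {z : Eis} : IsUnit z ↔ Nn z = 1 := by
  rw [isUnit_iff_N]
  constructor
  · intro h; unfold Nn; rw [h]; rfl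
  · intro h
    have h2 := coe_Nn z
    rw [h] at h2
    exact h2.symm.trans (by norm_num)

theorem Nn_natCast (m : ℕ) : Nn ((m : ℕ) : Eis) = m ^ 2 := by
  have h : N ((m : ℕ) : Eis) = (m : ℤ) ^ 2 := by simp [N]
  unfold Nn
  rw [h, ← Nat.cast_pow, Int.natAbs_natCast]

theorem conj_conj (z : Eis) : conj (conj z) = z := by ext <;> simp <;> ring

theorem conj_dvd {d z : Eis} (h : d ∣ z) : conj d ∣ conj z := by
  obtain ⟨c, rfl⟩ := h
  exact ⟨conj c, conj_mul d c⟩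

theorem Nn_dvd_Nn {d z : Eis} (h : d ∣ z) : Nn d ∣ Nn z := by
  obtain ⟨c, rfl⟩ := h
  rw [Nn_mul]
  exact Dvd.intro _ rfl

theorem isUnit_conj {z : Eis} (h : IsUnit z) : IsUnit (conj z) := by
  rw [isUnit_iff_Nn] at h ⊢
  rw [Nn_conj]; exact h

theorem irreducible_conj {z : Eis} (h : Irreducible z) : Irreducible (conj z) := by
  constructor
  · intro hu
    exact h.not_isUnit (by simpa [conj_conj] using isUnit_conj hu)
  · intro a b hab
    have h2 : z = conj a * conj b := by
      rw [← conj_mul, ← hab, conj_conj]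
    rcases h.isUnit_or_isUnit h2 with hu | hu
    · left; simpa [conj_conj] using isUnit_conj hu
    · right; simpa [conj_conj] using isUnit_conj hu

theorem irreducible_of_Nn_prime {z : Eis} (h : Nat.Prime (Nn z)) : Irreducible z := by
  constructor
  · rw [isUnit_iff_Nn]
    exact fun h1 => Nat.Prime.ne_one h h1
  · intro a b hab
    have hz : Nn z = Nn a * Nn b := by rw [hab, Nn_mul]
    rcases (Nat.Prime.eq_one_or_self_of_dvd h (Nn a) ⟨Nn b, hz⟩) with h1 | h1
    · left; exact isUnit_iff_Nn.2 h1
    · right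
      apply isUnit_iff_Nn.2
      have hzpos : Nn z ≠ 0 := h.pos.ne'
      rw [h1] at hz
      exact Nat.eq_of_mul_eq_mul_left (Nat.pos_of_ne_zero hzpos)
        (show Nn z * Nn b = Nn z * 1 by rw [mul_one, ← hz])

theorem prime_of_irreducible {z : Eis} (h : Irreducible z) : Prime z :=
  (irreducible_iff_prime).1 h

theorem mul_conj' (z : Eis) : ((Nn z : ℕ) : Eis) = z * conj z := by
  rw [mul_conj, ← coe_Nn]
  norm_cast

end Eis
end EisCount
namespace EisCount
namespace Eis

theorem Nn_intCast_nat (p : ℕ) : Nn ((p : ℕ) : Eis) = p ^ 2 := Nn_natCast p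

theorem natCast_dvd_of_dvd {a b : ℕ} (h : a ∣ b) : ((a : ℕ) : Eis) ∣ ((b : ℕ) : Eis) := by
  obtain ⟨c, rfl⟩ := h
  push_cast
  exact Dvd.intro _ rfl

theorem conj_natCast (m : ℕ) : conj ((m : ℕ) : Eis) = ((m : ℕ) : Eis) := by
  ext <;> simp

/-- extraction of a factor of given norm, for coprime decompositions of the norm -/
theorem extract (m : ℕ) : ∀ k : ℕ, Nat.Coprime m k → ∀ v : Eis, Nn v = m * k →
    ∃ z w : Eis, v = z * w ∧ Nn z = m ∧ Nn w = k := by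
  induction m using Nat.strong_induction_on with
  | _ m ih =>
  intro k hcop v hv
  rcases Nat.eq_zero_or_pos m with rfl | hm
  · have hk : k = 1 := hcop.symm.eq_one_of_dvd ⟨0, by ring⟩
    subst hk
    have hv0 : v = 0 := Nn_eq_zero_iff.1 (by omega)
    exact ⟨0, 1, by rw [hv0, zero_mul], Nn_eq_zero_iff.2 rfl, Nn_one⟩
  rcases Nat.lt_or_ge m 2 with hm1 | hm2
  · have : m = 1 := by omega
    subst this
    exact ⟨1, v, by rw [one_mul], Nn_one, by omega⟩
  -- m ≥ 2
  have hk0 : k ≠ 0 := by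
    intro hk
    subst hk
    have := Nat.coprime_zero_right m |>.1 hcop
    omega
  set p := m.minFac with hpdef
  have hp : p.Prime := Nat.minFac_prime (by omega)
  have hpm : p ∣ m := Nat.minFac_dvd m
  have hvne : v ≠ 0 := by
    intro h0
    rw [h0, Nn_eq_zero_iff.2 rfl] at hv
    exact Nat.mul_ne_zero (by omega) hk0 hv.symm
  have hpunit : ¬IsUnit ((p : ℕ) : Eis) := by
    rw [isUnit_iff_Nn, Nn_natCast]
    have := hp.two_le
    nlinarith
  have hpne : ((p : ℕ) : Eis) ≠ 0 := by
    intro h0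
    have := Nn_eq_zero_iff.2 h0
    rw [Nn_natCast] at this
    have := hp.two_le
    nlinarith
  obtain ⟨ρ, hρirr, hρdvd⟩ := WfDvdMonoid.exists_irreducible_factor hpunit hpne
  have hρprime : Prime ρ := prime_of_irreducible hρirr
  have hpndvd : (p : Eis) ∣ v * conj v := by
    rw [← mul_conj']
    exact natCast_dvd_of_dvd (by rw [hv]; exact Dvd.dvd.mul_right hpm k)
  have hρv : ρ ∣ v * conj v := hρdvd.trans hpndvd
  -- get an irreducible factor π of v with Nn π = Nn ρ
  obtain ⟨π, hπv, hπirr, hπN, hπp⟩ :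
      ∃ π : Eis, π ∣ v ∧ Irreducible π ∧ Nn π = Nn ρ ∧ π ∣ ((p : ℕ) : Eis) := by
    rcases hρprime.2.2 v (conj v) hρv with hd | hd
    · exact ⟨ρ, hd, hρirr, rfl, hρdvd⟩
    · refine ⟨conj ρ, ?_, irreducible_conj hρirr, Nn_conj ρ, ?_⟩
      · have := conj_dvd hd
        rwa [conj_conj] at this
      · have := conj_dvd hρdvd
        rwa [conj_natCast] at this
  have hNπ_dvd : Nn π ∣ p ^ 2 := by
    have := Nn_dvd_Nn hπp
    rwa [Nn_natCast] at this
  have hNπ_ne1 : Nn π ≠ 1 := fun h1 => hπirr.not_isUnit (isUnit_iff_Nn.2 h1)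
  obtain ⟨i, hi2, hieq⟩ := (Nat.dvd_prime_pow hp).1 hNπ_dvd
  have hicase : Nn π = p ∨ Nn π = p ^ 2 := by
    interval_cases i
    · simp at hieq; omega
    · left; rw [hieq, pow_one]
    · right; exact hieq
  obtain ⟨v', rfl⟩ := hπv
  rcases hicase with hNp | hNp2
  · -- Nn π = p; recurse with m / p
    have hrec : Nn v' = (m / p) * k := by
      have h1 : Nn (π * v') = Nn π * Nn v' := Nn_mul _ _
      rw [hv, hNp] at h1
      have hpm' : p * (m / p) = m := Nat.mul_div_cancel' hpm
      have hppos : 0 < p := hp.pos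
      nlinarith [Nat.mul_div_cancel' hpm]
    obtain ⟨z', w', hvw, hz', hw'⟩ :=
      ih (m / p) (Nat.div_lt_self (by omega) hp.one_lt) k
        (Nat.Coprime.coprime_dvd_left (Nat.div_dvd_of_dvd hpm) hcop) v' hrec
    refine ⟨π * z', w', by rw [hvw]; ring, ?_, hw'⟩
    rw [Nn_mul, hNp, hz', Nat.mul_div_cancel' hpm]
  · -- Nn π = p ^ 2 : then p ~ π and p ∣ v, p² ∣ m
    have hassoc : Associated π ((p : ℕ) : Eis) := by
      obtain ⟨t, ht⟩ := hπp
      have hNt : Nn t = 1 := by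
        have h2 := congrArg Nn ht
        rw [Nn_natCast, Nn_mul, hNp2] at h2
        have hppos : 0 < p ^ 2 := pow_pos hp.pos 2
        exact Nat.eq_of_mul_eq_mul_left hppos (by omega)
      exact ⟨(isUnit_iff_Nn.2 hNt).unit, by rw [IsUnit.unit_spec]; exact ht.symm⟩
    have hpdvdv : ((p : ℕ) : Eis) ∣ π * v' := (hassoc.symm.dvd).trans ⟨v', rfl⟩
    obtain ⟨v₂, hv₂⟩ := hpdvdv
    have hp2m : p ^ 2 ∣ m := by
      have h1 : Nn (π * v') = p ^ 2 * Nn v₂ := by rw [hv₂, Nn_mul, Nn_natCast]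
      rw [hv] at h1
      have h2 : p ^ 2 ∣ m * k := ⟨Nn v₂, h1⟩
      have hpk : Nat.Coprime (p ^ 2) k := (Nat.Coprime.coprime_dvd_left hpm hcop).pow_left 2
      exact (Nat.Coprime.dvd_of_dvd_mul_right hpk h2)
    have hrec : Nn v₂ = (m / p ^ 2) * k := by
      have h1 : Nn (π * v') = p ^ 2 * Nn v₂ := by rw [hv₂, Nn_mul, Nn_natCast]
      rw [hv] at h1
      have h3 : p ^ 2 * (m / p ^ 2) = m := Nat.mul_div_cancel' hp2m
      have hppos : 0 < p ^ 2 := pow_pos hp.pos 2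
      nlinarith
    obtain ⟨z', w', hvw, hz', hw'⟩ :=
      ih (m / p ^ 2) (Nat.div_lt_self (by omega) (Nat.one_lt_pow (by omega) hp.one_lt)) k
        (Nat.Coprime.coprime_dvd_left (Nat.div_dvd_of_dvd hp2m) hcop) v₂ hrec
    refine ⟨((p : ℕ) : Eis) * z', w', by rw [hv₂, hvw]; ring, ?_, hw'⟩
    rw [Nn_mul, Nn_natCast, hz', Nat.mul_div_cancel' hp2m]

end Eis
end EisCount
namespace EisCount
namespace Eis

theorem Nn_assoc {a b : Eis} (h : Associated a b) : Nn a = Nn b := by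
  obtain ⟨u, rfl⟩ := h
  rw [Nn_mul, isUnit_iff_Nn.1 u.isUnit, mul_one]

/-- the set of primary elements of norm `n` -/
def sol (n : ℕ) : Set Eis := {z : Eis | Nn z = n ∧ Pr z}

theorem sol_bound {n : ℕ} {z : Eis} (h : Nn z = n) :
    -(2 * (n : ℤ) + 1) ≤ z.re ∧ z.re ≤ 2 * n + 1 ∧
    -(2 * (n : ℤ) + 1) ≤ z.im ∧ z.im ≤ 2 * n + 1 := by
  have hN0 : N z = (n : ℤ) := by rw [← coe_Nn, h]
  have hN : z.re ^ 2 - z.re * z.im + z.im ^ 2 = (n : ℤ) := hN0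
  have h1 : z.re ^ 2 ≤ 4 * (n : ℤ) := by nlinarith [sq_nonneg (2 * z.im - z.re)]
  have h2 : z.im ^ 2 ≤ 4 * (n : ℤ) := by nlinarith [sq_nonneg (2 * z.re - z.im)]
  refine ⟨by nlinarith [sq_nonneg (z.re + 1)], by nlinarith [sq_nonneg (z.re - 1)],
    by nlinarith [sq_nonneg (z.im + 1)], by nlinarith [sq_nonneg (z.im - 1)]⟩

theorem sol_finite (n : ℕ) : (sol n).Finite := by
  have hsub : sol n ⊆ (fun p : ℤ × ℤ => (⟨p.1, p.2⟩ : Eis)) ''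
      (Set.Icc (-(2 * (n : ℤ) + 1)) (2 * n + 1) ×ˢ Set.Icc (-(2 * (n : ℤ) + 1)) (2 * n + 1)) := by
    rintro z ⟨hz, -⟩
    obtain ⟨b1, b2, b3, b4⟩ := sol_bound hz
    exact ⟨(z.re, z.im), ⟨⟨b1, b2⟩, ⟨b3, b4⟩⟩, rfl⟩
  exact (((Set.finite_Icc _ _).prod (Set.finite_Icc _ _)).image _).subset hsub

/-- the number of primary elements of norm `n` -/
noncomputable def F (n : ℕ) : ℕ := (sol n).ncard

theorem ncard_prod {α β : Type*} {s : Set α} {t : Set β} (hs : s.Finite) (ht : t.Finite) :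
    (s ×ˢ t).ncard = s.ncard * t.ncard := by
  have hst : (s ×ˢ t) = ↑(hs.toFinset ×ˢ ht.toFinset) := by
    ext p; simp
  rw [hst, Set.ncard_coe_finset, Finset.card_product,
    Set.ncard_eq_toFinset_card s hs, Set.ncard_eq_toFinset_card t ht]

theorem isRelPrime_of_coprime {z w : Eis} (h : Nat.Coprime (Nn z) (Nn w)) : IsRelPrime z w := by
  intro d hdz hdw
  have h1 := Nn_dvd_Nn hdz
  have h2 := Nn_dvd_Nn hdw
  have : Nn d ∣ Nat.gcd (Nn z) (Nn w) := Nat.dvd_gcd h1 h2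
  rw [h] at this
  exact isUnit_iff_Nn.2 (Nat.eq_one_of_dvd_one this)

theorem F_one : F 1 = 1 := by
  have : sol 1 = {1} := by
    ext z
    constructor
    · rintro ⟨h1, h2⟩
      have hu : IsUnit z := isUnit_iff_Nn.2 h1
      rcases unit_cases (isUnit_iff_N.1 hu) with ⟨ha, hb⟩ | ⟨ha, hb⟩ | ⟨ha, hb⟩ | ⟨ha, hb⟩ |
        ⟨ha, hb⟩ | ⟨ha, hb⟩ <;>
      · obtain ⟨p1, p2⟩ := h2
        first
        | omega
        | (ext <;> simp [ha, hb])
    · rintro rfl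
      exact ⟨Nn_one, by constructor <;> simp [Pr]⟩
  rw [F, this, Set.ncard_singleton]

theorem F_mul {m k : ℕ} (hcop : Nat.Coprime m k) : F (m * k) = F m * F k := by
  rcases Nat.eq_zero_or_pos m with rfl | hm
  · have hk : k = 1 := by simpa using hcop
    subst hk
    simp [F_one]
  rcases Nat.eq_zero_or_pos k with rfl | hk
  · have hm1 : m = 1 := by simpa using hcop
    subst hm1
    simp [F_one]
  -- main case
  have hbij : Set.BijOn (fun zw : Eis × Eis => pA (zw.1 * zw.2)) (sol m ×ˢ sol k)
      (sol (m * k)) := by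
    refine ⟨?_, ?_, ?_⟩
    · rintro ⟨z, w⟩ ⟨⟨hz1, hz2⟩, ⟨hw1, hw2⟩⟩
      have hzw : z * w ≠ 0 := mul_ne_zero hz2.ne_zero hw2.ne_zero
      refine ⟨?_, pA_pr hzw⟩
      rw [← Nn_assoc (pA_assoc hzw), Nn_mul, hz1, hw1]
    · rintro ⟨z, w⟩ ⟨⟨hz1, hz2⟩, ⟨hw1, hw2⟩⟩ ⟨z', w'⟩ ⟨⟨hz1', hz2'⟩, ⟨hw1', hw2'⟩⟩ heq
      simp only at heq
      have hzw : z * w ≠ 0 := mul_ne_zero hz2.ne_zero hw2.ne_zero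
      have hzw' : z' * w' ≠ 0 := mul_ne_zero hz2'.ne_zero hw2'.ne_zero
      have hassoc : Associated (z * w) (z' * w') :=
        (pA_assoc hzw).trans (heq ▸ (pA_assoc hzw').symm)
      have hdvd : z' ∣ z * w := dvd_trans (dvd_mul_right z' w') hassoc.symm.dvd
      have hrel : IsRelPrime z' w := isRelPrime_of_coprime (by rw [hz1', hw1]; exact hcop)
      have hz'z : z' ∣ z := hrel.dvd_of_dvd_mul_right hdvd
      obtain ⟨t, rfl⟩ := hz'z
      have hNt : Nn t = 1 := by
        rw [Nn_mul, hz1'] at hz1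
        exact Nat.eq_of_mul_eq_mul_left hm (by omega)
      have hazz : Associated z' (z' * t) := associated_mul_unit_right z' t (isUnit_iff_Nn.2 hNt)
      have hzz : z' = z' * t := pr_unique hz2' hz2 hazz
      have hww : w = w' := by
        apply pr_unique hw2 hw2'
        refine Associated.of_mul_left ?_ (Associated.refl (z' * t)) ?_
        · exact hassoc.trans (by rw [← hzz])
        · exact mul_ne_zero hz2'.ne_zero (fun ht0 => by simp [ht0] at hNt; exact absurd hNt (by rw [Nn_eq_zero_iff.2 rfl] at *; omega))
      rw [Prod.ext_iff]
      exact ⟨hzz.symm, hww⟩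
    · rintro v ⟨hv1, hv2⟩
      obtain ⟨z, w, rfl, hz, hw⟩ := extract m k hcop v hv1
      have hz0 : z ≠ 0 := fun h0 => by rw [h0, Nn_eq_zero_iff.2 rfl] at hz; omega
      have hw0 : w ≠ 0 := fun h0 => by rw [h0, Nn_eq_zero_iff.2 rfl] at hw; omega
      refine ⟨(pA z, pA w), ⟨⟨?_, pA_pr hz0⟩, ⟨?_, pA_pr hw0⟩⟩, ?_⟩
      · rw [← Nn_assoc (pA_assoc hz0), hz]
      · rw [← Nn_assoc (pA_assoc hw0), hw]
      · exact pA_eq hv2 (((pA_assoc hz0).symm.mul_mul (pA_assoc hw0).symm))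
  have himg := hbij.image_eq
  rw [F, ← himg, Set.ncard_image_of_injOn hbij.injOn,
    ncard_prod (sol_finite m) (sol_finite k)]
  rfl

end Eis
end EisCount
namespace EisCount
namespace Eis

theorem Nn_pow (z : Eis) (i : ℕ) : Nn (z ^ i) = Nn z ^ i := by
  induction i with
  | zero => simpa using Nn_one
  | succ i ih => rw [pow_succ, pow_succ, Nn_mul, ih]

theorem sq_mod_three (c : ℤ) : c ^ 2 % 3 = 0 ∨ c ^ 2 % 3 = 1 := by
  have h3 : c % 3 = 0 ∨ c % 3 = 1 ∨ c % 3 = 2 := by omega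
  have hmm : c ^ 2 % 3 = (c % 3) * (c % 3) % 3 := by
    rw [pow_two, Int.mul_emod]
  rcases h3 with h | h | h <;> rw [hmm, h] <;> norm_num

theorem N_mod_three (z : Eis) : N z % 3 = 0 ∨ N z % 3 = 1 := by
  have key : N z = (z.re + z.im) ^ 2 - 3 * (z.re * z.im) := by unfold N; ring
  have := sq_mod_three (z.re + z.im)
  omega

/-- a natural prime that is `2` mod `3` is irreducible in `Eis` -/
theorem irreducible_q {q : ℕ} (hq : q.Prime) (h3 : q % 3 = 2) :
    Irreducible ((q : ℕ) : Eis) := by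
  constructor
  · rw [isUnit_iff_Nn, Nn_natCast]
    intro h1
    have := hq.two_le
    nlinarith
  · intro a b hab
    have hN : Nn a * Nn b = q ^ 2 := by rw [← Nn_mul, ← hab, Nn_natCast]
    have hadvd : Nn a ∣ q ^ 2 := ⟨Nn b, hN.symm⟩
    obtain ⟨i, hi2, hieq⟩ := (Nat.dvd_prime_pow hq).1 hadvd
    -- Nn a ≠ q since norms are never 2 mod 3
    have hnotq : Nn a ≠ q := by
      intro haq
      have h1 : N a % 3 = 0 ∨ N a % 3 = 1 := N_mod_three a
      have h2 : (Nn a : ℤ) = N a := coe_Nn a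
      have h4 : (q : ℤ) % 3 = 2 := by omega
      rw [haq] at h2
      omega
    interval_cases i
    · left
      exact isUnit_iff_Nn.2 (by simpa using hieq)
    · exact absurd (by simpa using hieq) hnotq
    · right
      apply isUnit_iff_Nn.2
      rw [hieq] at hN
      have hq2 : 0 < q ^ 2 := pow_pos hq.pos 2
      exact Nat.eq_of_mul_eq_mul_left hq2 (by omega)

/-- for `p ≡ 1 (mod 3)` there is an element of norm `p` -/
theorem exists_pi {p : ℕ} (hp : p.Prime) (h3 : p % 3 = 1) : ∃ π : Eis, Nn π = p := by
  haveI : Fact p.Prime := ⟨hp⟩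
  -- get an element of order 3 in (ZMod p)ˣ
  have hcard : (3 : ℕ) ∣ Fintype.card (ZMod p)ˣ := by
    rw [ZMod.card_units p]
    omega
  obtain ⟨g, hg⟩ := exists_prime_orderOf_dvd_card (G := (ZMod p)ˣ) 3 hcard
  have hg3 : g ^ 3 = 1 := by rw [← hg]; exact pow_orderOf_eq_one g
  have hgne : g ≠ 1 := by
    intro h1
    rw [h1, orderOf_one] at hg
    omega
  set y : ZMod p := (g : ZMod p) with hy
  have hy3 : y ^ 3 = 1 := by
    rw [hy, ← Units.val_pow_eq_pow_val, hg3, Units.val_one]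
  have hyne : y ≠ 1 := fun h1 => hgne (Units.ext h1)
  have hquad : y ^ 2 + y + 1 = 0 := by
    have hfac : (y - 1) * (y ^ 2 + y + 1) = 0 := by
      have : (y - 1) * (y ^ 2 + y + 1) = y ^ 3 - 1 := by ring
      rw [this, hy3, sub_self]
    rcases mul_eq_zero.1 hfac with h | h
    · exact absurd (by linear_combination h) hyne
    · exact h
  -- lift to an integer x with p ∣ x² + x + 1
  obtain ⟨x, hdvd⟩ : ∃ x : ℤ, (p : ℤ) ∣ x ^ 2 + x + 1 := by
    refine ⟨(y.val : ℤ), ?_⟩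
    rw [← ZMod.intCast_zmod_eq_zero_iff_dvd]
    push_cast
    rw [ZMod.natCast_val, ZMod.cast_id]
    exact hquad
  -- p is not irreducible in Eis
  have hpnotirr : ¬Irreducible ((p : ℕ) : Eis) := by
    intro hirr
    have hprime : Prime ((p : ℕ) : Eis) := prime_of_irreducible hirr
    have hfac : (⟨x, -1⟩ : Eis) * ⟨x + 1, 1⟩ = ((x ^ 2 + x + 1 : ℤ) : Eis) := by
      ext <;> simp only [mul_re, mul_im, intCast_re, intCast_im] <;> ring
    have hdvd2 : ((p : ℕ) : Eis) ∣ (⟨x, -1⟩ : Eis) * ⟨x + 1, 1⟩ := by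
      rw [hfac]
      have := map_dvd (Int.castRingHom Eis) hdvd
      simpa using this
    have hpim : ∀ c : Eis, (((p : ℕ) : Eis) * c).im = p * c.im := by
      intro c; simp
    rcases hprime.2.2 _ _ hdvd2 with ⟨c, hc⟩ | ⟨c, hc⟩
    · have := congrArg Eis.im hc
      rw [hpim] at this
      simp at this
      have h2 : (p : ℤ) ∣ -1 := ⟨c.im, this⟩
      have := Int.le_of_dvd (by norm_num) ((dvd_neg.1 h2))
      have := hp.two_le
      omega
    · have := congrArg Eis.im hc
      rw [hpim] at this
      simp at this
      have h2 : (p : ℤ) ∣ 1 := ⟨c.im, this⟩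
      have := Int.le_of_dvd one_pos h2
      have := hp.two_le
      omega
  rw [irreducible_iff] at hpnotirr
  push_neg at hpnotirr
  have hpunit : ¬IsUnit ((p : ℕ) : Eis) := by
    rw [isUnit_iff_Nn, Nn_natCast]
    intro h1
    have := hp.two_le
    nlinarith
  obtain ⟨a, b, hab, ha, hb⟩ := hpnotirr hpunit
  have hN : Nn a * Nn b = p ^ 2 := by rw [← Nn_mul, ← hab, Nn_natCast]
  have hadvd : Nn a ∣ p ^ 2 := ⟨Nn b, hN.symm⟩
  obtain ⟨i, hi2, hieq⟩ := (Nat.dvd_prime_pow hp).1 hadvd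
  interval_cases i
  · exact absurd (isUnit_iff_Nn.2 (by simpa using hieq)) ha
  · exact ⟨a, by simpa using hieq⟩
  · exfalso
    apply hb
    apply isUnit_iff_Nn.2
    rw [hieq] at hN
    have hq2 : 0 < p ^ 2 := pow_pos hp.pos 2
    exact Nat.eq_of_mul_eq_mul_left hq2 (by omega)

/-- π of prime norm `p ≡ 1 (mod 3)` is not associated to its conjugate -/
theorem pi_not_assoc_conj {p : ℕ} (hp : p.Prime) (h3 : p % 3 = 1) {π : Eis}
    (hπ : Nn π = p) : ¬Associated π (conj π) := by
  intro hassoc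
  have horb := associated_iff_orb.1 hassoc
  have hNπ : π.re ^ 2 - π.re * π.im + π.im ^ 2 = (p : ℤ) := by
    rw [show π.re ^ 2 - π.re * π.im + π.im ^ 2 = N π from rfl, ← coe_Nn π, hπ]
  have hsq : ∀ c : ℤ, c ^ 2 = (p : ℤ) → False := by
    intro c hc
    have h1 : c.natAbs ^ 2 = p := by
      have h2 := congrArg Int.natAbs hc
      rwa [Int.natAbs_pow, Int.natAbs_natCast] at h2
    have hdvd : c.natAbs ∣ p := ⟨c.natAbs, by rw [← h1]; ring⟩
    have h2l := hp.two_le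
    rcases hp.eq_one_or_self_of_dvd _ hdvd with h | h <;> rw [h] at h1
    · omega
    · nlinarith
  have h3sq : ∀ c : ℤ, 3 * c ^ 2 = (p : ℤ) → False := by
    intro c hc
    have h2 : ((3 : ℕ) : ℤ) ∣ (p : ℤ) := ⟨c ^ 2, by push_cast; linarith⟩
    have hdvd : (3 : ℕ) ∣ p := Int.natCast_dvd_natCast.1 h2
    rcases hp.eq_one_or_self_of_dvd 3 hdvd with h | h
    · omega
    · omega
  unfold orb at horb
  simp only [conj_re, conj_im] at horb
  rcases horb with ⟨e1, e2⟩ | ⟨e1, e2⟩ | ⟨e1, e2⟩ | ⟨e1, e2⟩ | ⟨e1, e2⟩ | ⟨e1, e2⟩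
  · have h : π.im = 0 := by omega
    exact hsq π.re (by linear_combination hNπ + (π.re - π.im) * h)
  · have h : π.im = 2 * π.re := by omega
    exact h3sq π.re (by linear_combination hNπ - (π.im + π.re) * h)
  · have h : π.re = 0 := by omega
    exact hsq π.im (by linear_combination hNπ + (π.im - π.re) * h)
  · have h : π.re = 2 * π.im := by omega
    exact h3sq π.im (by linear_combination hNπ - (π.re + π.im) * h)
  · have h : π.re = -π.im := by omega
    exact h3sq π.im (by linear_combination hNπ + (2 * π.im - π.re) * h)
  · have h : π.re = π.im := by omega
    exact hsq π.re (by linear_combination hNπ + π.im * h)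

end Eis
end EisCount
namespace EisCount
namespace Eis

theorem classify_p {p : ℕ} (hp : p.Prime) {π : Eis} (hπ : Nn π = p) :
    ∀ e : ℕ, ∀ z : Eis, Nn z = p ^ e →
      ∃ i, i ≤ e ∧ Associated z (π ^ i * conj π ^ (e - i)) := by
  have hπirr : Irreducible π := irreducible_of_Nn_prime (hπ ▸ hp)
  have hπcirr : Irreducible (conj π) := irreducible_of_Nn_prime (by rw [Nn_conj, hπ]; exact hp)
  intro e
  induction e with
  | zero =>
    intro z hz
    refine ⟨0, le_refl 0, ?_⟩
    simpa [associated_one_iff_isUnit] using isUnit_iff_Nn.2 (by simpa using hz)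
  | succ e ih =>
    intro z hz
    have hz0 : z ≠ 0 := by
      intro h0
      rw [h0, Nn_eq_zero_iff.2 rfl] at hz
      exact (pow_ne_zero (e + 1) hp.pos.ne') hz.symm
    have hzu : ¬IsUnit z := by
      rw [isUnit_iff_Nn, hz]
      exact (Nat.one_lt_pow (by omega) hp.one_lt).ne'
    obtain ⟨ρ, hρirr, hρz⟩ := WfDvdMonoid.exists_irreducible_factor hzu hz0
    have hρprime := prime_of_irreducible hρirr
    have hρdvd : ρ ∣ π * conj π := by
      have h1 : ρ ∣ z * conj z := hρz.trans (dvd_mul_right z (conj z))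
      rw [← mul_conj' z, hz] at h1
      have h2 : ((p ^ (e + 1) : ℕ) : Eis) = (((p : ℕ) : Eis)) ^ (e + 1) := by push_cast; ring
      rw [h2] at h1
      have h3 : ρ ∣ ((p : ℕ) : Eis) := hρprime.dvd_of_dvd_pow h1
      have h4 : ((p : ℕ) : Eis) = π * conj π := by rw [← hπ]; exact mul_conj' π
      rwa [h4] at h3
    obtain ⟨z', rfl⟩ := hρz
    rcases hρprime.2.2 π (conj π) hρdvd with hc | hc
    · have hassoc : Associated ρ π := hρirr.associated_of_dvd hπirr hc
      have hNz' : Nn z' = p ^ e := by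
        rw [Nn_mul, Nn_assoc hassoc, hπ, pow_succ'] at hz
        exact Nat.eq_of_mul_eq_mul_left hp.pos hz
      obtain ⟨i, hi, hia⟩ := ih z' hNz'
      refine ⟨i + 1, by omega, ?_⟩
      have hmm : Associated (ρ * z') (π * (π ^ i * conj π ^ (e - i))) :=
        Associated.mul_mul hassoc hia
      have heq : π ^ (i + 1) * conj π ^ (e + 1 - (i + 1)) =
          π * (π ^ i * conj π ^ (e - i)) := by
        rw [show e + 1 - (i + 1) = e - i by omega]; ring
      rwa [heq]
    · have hassoc : Associated ρ (conj π) := hρirr.associated_of_dvd hπcirr hc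
      have hNz' : Nn z' = p ^ e := by
        rw [Nn_mul, Nn_assoc hassoc, Nn_conj, hπ, pow_succ'] at hz
        exact Nat.eq_of_mul_eq_mul_left hp.pos hz
      obtain ⟨i, hi, hia⟩ := ih z' hNz'
      refine ⟨i, by omega, ?_⟩
      have hmm : Associated (ρ * z') (conj π * (π ^ i * conj π ^ (e - i))) :=
        Associated.mul_mul hassoc hia
      have heq : π ^ i * conj π ^ (e + 1 - i) = conj π * (π ^ i * conj π ^ (e - i)) := by
        rw [show e + 1 - i = (e - i) + 1 by omega]; ring
      rwa [heq]

theorem F_p_pow {p : ℕ} (hp : p.Prime) (h3 : p % 3 = 1) (e : ℕ) : F (p ^ e) = e + 1 := by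
  obtain ⟨π, hπ⟩ := exists_pi hp h3
  have hπirr : Irreducible π := irreducible_of_Nn_prime (hπ ▸ hp)
  have hπcirr : Irreducible (conj π) := irreducible_of_Nn_prime (by rw [Nn_conj, hπ]; exact hp)
  have hπ0 : π ≠ 0 := fun h0 => by
    rw [h0, Nn_eq_zero_iff.2 rfl] at hπ; exact hp.pos.ne' hπ.symm
  have hc0 : conj π ≠ 0 := fun h0 => by
    have := Nn_conj π
    rw [h0, Nn_eq_zero_iff.2 rfl, hπ] at this
    exact hp.pos.ne' this.symm
  have hkey : sol (p ^ e) = (fun i => pA (π ^ i * conj π ^ (e - i))) '' (Set.Iic e) := by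
    ext z
    constructor
    · rintro ⟨h1, h2⟩
      obtain ⟨i, hi, hia⟩ := classify_p hp hπ e z h1
      exact ⟨i, hi, pA_eq h2 hia.symm⟩
    · rintro ⟨i, hi, rfl⟩
      have hne : π ^ i * conj π ^ (e - i) ≠ 0 :=
        mul_ne_zero (pow_ne_zero _ hπ0) (pow_ne_zero _ hc0)
      refine ⟨?_, pA_pr hne⟩
      rw [← Nn_assoc (pA_assoc hne), Nn_mul, Nn_pow, Nn_pow, Nn_conj, hπ, ← pow_add]
      congr 1
      simp only [Set.mem_Iic] at hi
      omega
  have hinj : Set.InjOn (fun i => pA (π ^ i * conj π ^ (e - i))) (Set.Iic e) := by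
    have hπprime : Prime π := prime_of_irreducible hπirr
    have hhelp : ∀ i j, i < j → j ≤ e →
        Associated (π ^ i * conj π ^ (e - i)) (π ^ j * conj π ^ (e - j)) → False := by
      intro i j hij hje hassoc
      have h1 : π ^ i * conj π ^ (e - i) = (π ^ i * conj π ^ (e - j)) * conj π ^ (j - i) := by
        rw [show e - i = (e - j) + (j - i) by omega]; ring
      have hj' : i + (j - i) = j := by omega
      have h2 : π ^ j * conj π ^ (e - j) = (π ^ i * conj π ^ (e - j)) * π ^ (j - i) := by
        rw [show π ^ j = π ^ i * π ^ (j - i) from by rw [← pow_add, hj']]; ring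
      rw [h1, h2] at hassoc
      have hX : π ^ i * conj π ^ (e - j) ≠ 0 :=
        mul_ne_zero (pow_ne_zero _ hπ0) (pow_ne_zero _ hc0)
      have hca : Associated (conj π ^ (j - i)) (π ^ (j - i)) :=
        Associated.of_mul_left hassoc (Associated.refl (π ^ i * conj π ^ (e - j))) hX
      have h4 : π ∣ conj π ^ (j - i) :=
        (dvd_pow_self π (by omega : j - i ≠ 0)).trans hca.symm.dvd
      have h5 : π ∣ conj π := hπprime.dvd_of_dvd_pow h4
      exact pi_not_assoc_conj hp h3 hπ (hπirr.associated_of_dvd hπcirr h5)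
    intro i hi j hj heq
    simp only at heq
    by_contra hne
    have hassoc : Associated (π ^ i * conj π ^ (e - i)) (π ^ j * conj π ^ (e - j)) := by
      have hne1 : π ^ i * conj π ^ (e - i) ≠ 0 :=
        mul_ne_zero (pow_ne_zero _ hπ0) (pow_ne_zero _ hc0)
      have hne2 : π ^ j * conj π ^ (e - j) ≠ 0 :=
        mul_ne_zero (pow_ne_zero _ hπ0) (pow_ne_zero _ hc0)
      exact (pA_assoc hne1).trans (heq ▸ (pA_assoc hne2).symm)
    simp only [Set.mem_Iic] at hi hj
    rcases Nat.lt_or_ge i j with h | h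
    · exact hhelp i j h hj hassoc
    · exact hhelp j i (by omega) hi hassoc.symm
  rw [F, hkey, Set.ncard_image_of_injOn hinj, ← Finset.coe_Iic, Set.ncard_coe_finset,
    Nat.card_Iic]

end Eis
end EisCount
namespace EisCount
namespace Eis

/-- `λ = 1 - ω`, of norm 3 -/
def lam : Eis := ⟨1, -1⟩

theorem Nn_lam : Nn lam = 3 := rfl

theorem lam_ne_zero : lam ≠ 0 := fun h => by
  have := congrArg Eis.re h
  simp [lam] at this

theorem lam_assoc_conj : Associated lam (conj lam) := by
  apply associated_iff_orb.2
  unfold orb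
  right; right; right; right; left
  constructor <;> rfl

theorem lam_irr : Irreducible lam := irreducible_of_Nn_prime (by rw [Nn_lam]; norm_num)

theorem generic_singleton_classify {r : ℕ} (hr : 2 ≤ r) {μ : Eis}
    (hrfac : ((r : ℕ) : Eis) = μ * conj μ)
    (hμirr : Irreducible μ) (hμc : Associated (conj μ) μ) (hNμ : Nn μ = r) :
    ∀ e, ∀ z : Eis, Nn z = r ^ e → Associated z (μ ^ e) := by
  intro e
  induction e with
  | zero =>
    intro z hz
    simpa [associated_one_iff_isUnit] using isUnit_iff_Nn.2 (by simpa using hz)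
  | succ e ih =>
    intro z hz
    have hz0 : z ≠ 0 := by
      intro h0
      rw [h0, Nn_eq_zero_iff.2 rfl] at hz
      exact (pow_ne_zero (e + 1) (by omega : r ≠ 0)) hz.symm
    have hzu : ¬IsUnit z := by
      rw [isUnit_iff_Nn, hz]
      exact (Nat.one_lt_pow (by omega) hr).ne'
    obtain ⟨ρ, hρirr, hρz⟩ := WfDvdMonoid.exists_irreducible_factor hzu hz0
    have hρprime := prime_of_irreducible hρirr
    have hρdvd : ρ ∣ μ * conj μ := by
      have h1 : ρ ∣ z * conj z := hρz.trans (dvd_mul_right z (conj z))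
      rw [← mul_conj' z, hz] at h1
      have h2 : ((r ^ (e + 1) : ℕ) : Eis) = (((r : ℕ) : Eis)) ^ (e + 1) := by push_cast; ring
      rw [h2] at h1
      have h3 : ρ ∣ ((r : ℕ) : Eis) := hρprime.dvd_of_dvd_pow h1
      rwa [hrfac] at h3
    have hμcirr : Irreducible (conj μ) := irreducible_conj hμirr
    have hassoc : Associated ρ μ := by
      rcases hρprime.2.2 μ (conj μ) hρdvd with hc | hc
      · exact hρirr.associated_of_dvd hμirr hc
      · exact (hρirr.associated_of_dvd hμcirr hc).trans hμc
    obtain ⟨z', rfl⟩ := hρz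
    have hNz' : Nn z' = r ^ e := by
      rw [Nn_mul, Nn_assoc hassoc, hNμ, pow_succ'] at hz
      exact Nat.eq_of_mul_eq_mul_left (by omega) hz
    have := Associated.mul_mul hassoc (ih z' hNz')
    rwa [← pow_succ'] at this

theorem F_singleton {n : ℕ} {μ : Eis} (hμ : μ ≠ 0) (hNμ : Nn μ = n)
    (hcl : ∀ z : Eis, Nn z = n → Associated z μ) : F n = 1 := by
  have hsol : sol n = {pA μ} := by
    ext z
    constructor
    · rintro ⟨h1, h2⟩
      exact (pA_eq h2 (hcl z h1).symm).symm
    · rintro rfl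
      exact ⟨by rw [← Nn_assoc (pA_assoc hμ), hNμ], pA_pr hμ⟩
  rw [F, hsol, Set.ncard_singleton]

theorem F_three_pow (e : ℕ) : F (3 ^ e) = 1 := by
  have hfac : ((3 : ℕ) : Eis) = lam * conj lam := by rw [← Nn_lam]; exact mul_conj' lam
  refine F_singleton (pow_ne_zero e lam_ne_zero) ?_
    (generic_singleton_classify (by norm_num) hfac lam_irr lam_assoc_conj.symm Nn_lam e)
  rw [Nn_pow, Nn_lam]

theorem F_q_pow {q : ℕ} (hq : q.Prime) (h3 : q % 3 = 2) (f : ℕ) : F (q ^ (2 * f)) = 1 := by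
  have hirr : Irreducible ((q : ℕ) : Eis) := irreducible_q hq h3
  have hq0 : ((q : ℕ) : Eis) ≠ 0 := by
    intro h0
    have := congrArg Eis.re h0
    simp at this
    exact hq.pos.ne' this
  -- classification: z with Nn z = q ^ (2f) is associated to q ^ f
  have hclassify : ∀ f, ∀ z : Eis, Nn z = q ^ (2 * f) → Associated z (((q : ℕ) : Eis) ^ f) := by
    intro f
    induction f with
    | zero =>
      intro z hz
      simpa [associated_one_iff_isUnit] using isUnit_iff_Nn.2 (by simpa using hz)
    | succ f ih =>
      intro z hz
      have hz0 : z ≠ 0 := by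
        intro h0
        rw [h0, Nn_eq_zero_iff.2 rfl] at hz
        exact (pow_ne_zero _ hq.pos.ne') hz.symm
      have hzu : ¬IsUnit z := by
        rw [isUnit_iff_Nn, hz]
        exact (Nat.one_lt_pow (by omega) hq.one_lt).ne'
      obtain ⟨ρ, hρirr, hρz⟩ := WfDvdMonoid.exists_irreducible_factor hzu hz0
      have hρprime := prime_of_irreducible hρirr
      have hρdvd : ρ ∣ ((q : ℕ) : Eis) := by
        have h1 : ρ ∣ z * conj z := hρz.trans (dvd_mul_right z (conj z))
        rw [← mul_conj' z, hz] at h1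
        have h2 : ((q ^ (2 * (f + 1)) : ℕ) : Eis) = (((q : ℕ) : Eis)) ^ (2 * (f + 1)) := by
          push_cast; ring
        rw [h2] at h1
        exact hρprime.dvd_of_dvd_pow h1
      have hassoc : Associated ρ ((q : ℕ) : Eis) := hρirr.associated_of_dvd hirr hρdvd
      obtain ⟨z', rfl⟩ := hρz
      have hNz' : Nn z' = q ^ (2 * f) := by
        rw [Nn_mul, Nn_assoc hassoc, Nn_natCast] at hz
        have heq : q ^ (2 * (f + 1)) = q ^ 2 * q ^ (2 * f) := by
          rw [← pow_add]; congr 1; omega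
        rw [heq] at hz
        exact Nat.eq_of_mul_eq_mul_left (pow_pos hq.pos 2) hz
      have := Associated.mul_mul hassoc (ih z' hNz')
      rwa [← pow_succ'] at this
  refine F_singleton (pow_ne_zero f hq0) ?_ (hclassify f)
  rw [Nn_pow, Nn_natCast, ← pow_mul]

end Eis
end EisCount
namespace EisCount
namespace Eis

theorem F_formula (n : ℕ) (hn : 0 < n)
    (h : ∀ q : ℕ, q.Prime → q % 3 = 2 → Even (n.factorization q)) :
    F n = ∏ p ∈ n.primeFactors.filter (fun p => p % 3 = 1), (n.factorization p + 1) := by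
  have hmf := Nat.multiplicative_factorization F (fun x y hxy => F_mul hxy) F_one hn.ne'
  rw [hmf, Finsupp.prod]
  rw [Nat.support_factorization]
  rw [← Finset.prod_filter_mul_prod_filter_not n.primeFactors (fun p => p % 3 = 1)]
  have h1 : ∏ p ∈ n.primeFactors.filter (fun p => p % 3 = 1), F (p ^ n.factorization p) =
      ∏ p ∈ n.primeFactors.filter (fun p => p % 3 = 1), (n.factorization p + 1) := by
    apply Finset.prod_congr rfl
    intro p hp
    rw [Finset.mem_filter] at hp
    exact F_p_pow (Nat.prime_of_mem_primeFactors hp.1) hp.2 _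
  have h2 : ∏ p ∈ n.primeFactors.filter (fun p => ¬p % 3 = 1), F (p ^ n.factorization p) = 1 := by
    apply Finset.prod_eq_one
    intro p hp
    rw [Finset.mem_filter] at hp
    have hprime := Nat.prime_of_mem_primeFactors hp.1
    have h2le := hprime.two_le
    rcases (by omega : p % 3 = 0 ∨ p % 3 = 2) with h0 | h0
    · have h3p : (3 : ℕ) ∣ p := by omega
      rcases hprime.eq_one_or_self_of_dvd 3 h3p with he | he
      · omega
      · rw [← he]
        exact F_three_pow _
    · obtain ⟨f, hf⟩ := h p hprime h0
      have : n.factorization p = 2 * f := by omega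
      rw [this]
      exact F_q_pow hprime h0 f
  rw [h1, h2, mul_one]

end Eis
end EisCount
namespace EisCount
namespace Eis

/-- embedding of positive solutions into `Eis` -/
def g (ab : ℕ × ℕ) : Eis := ⟨(ab.1 : ℤ) + ab.2, (ab.2 : ℤ)⟩

theorem Nn_g (a b : ℕ) : Nn (g (a, b)) = a ^ 2 + a * b + b ^ 2 := by
  have h1 : N (g (a, b)) = ((a ^ 2 + a * b + b ^ 2 : ℕ) : ℤ) := by
    show ((a : ℤ) + b) ^ 2 - ((a : ℤ) + b) * b + (b : ℤ) ^ 2 = _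
    push_cast
    ring
  have h2 := coe_Nn (g (a, b))
  rw [h1] at h2
  exact_mod_cast h2

theorem main_count (n : ℕ) (hn : 0 < n) :
    {z : ℕ × ℕ | 0 < z.1 ∧ 0 < z.2 ∧ z.1 ^ 2 + z.1 * z.2 + z.2 ^ 2 = n}.Finite ∧
    {z : ℕ × ℕ | 0 < z.1 ∧ 0 < z.2 ∧ z.1 ^ 2 + z.1 * z.2 + z.2 ^ 2 = n}.ncard
      + (if IsSquare n then 1 else 0) = F n := by
  set T := {z : ℕ × ℕ | 0 < z.1 ∧ 0 < z.2 ∧ z.1 ^ 2 + z.1 * z.2 + z.2 ^ 2 = n} with hT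
  set C := {z : Eis | Nn z = n ∧ Pr z ∧ 0 < z.im} with hC
  set B := {z : Eis | Nn z = n ∧ Pr z ∧ z.im = 0} with hB
  have hCfin : C.Finite := (sol_finite n).subset (fun z hz => ⟨hz.1, hz.2.1⟩)
  have hBfin : B.Finite := (sol_finite n).subset (fun z hz => ⟨hz.1, hz.2.1⟩)
  have hbij : Set.BijOn g T C := by
    refine ⟨?_, ?_, ?_⟩
    · rintro ⟨a, b⟩ ⟨ha, hb, hab⟩
      refine ⟨by rw [Nn_g a b]; exact hab, ⟨?_, ?_⟩, ?_⟩
      · show (0 : ℤ) ≤ (b : ℤ); positivity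
      · show (b : ℤ) < (a : ℤ) + b
        have : (0 : ℤ) < (a : ℤ) := by exact_mod_cast ha
        linarith
      · show (0 : ℤ) < (b : ℤ); exact_mod_cast hb
    · rintro ⟨a, b⟩ - ⟨a', b'⟩ - heq
      have h1 := congrArg Eis.re heq
      have h2 := congrArg Eis.im heq
      simp only [g] at h1 h2
      have hb : b = b' := by exact_mod_cast h2
      have ha : a = a' := by
        rw [hb] at h1
        have : (a : ℤ) = a' := by linarith [h1]
        exact_mod_cast this
      simp [ha, hb]
    · rintro z ⟨h1, ⟨p1, p2⟩, h3⟩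
      refine ⟨((z.re - z.im).toNat, z.im.toNat), ?_, ?_⟩
      · have hgz : g ((z.re - z.im).toNat, z.im.toNat) = z := by
          ext
          · show (((z.re - z.im).toNat : ℤ)) + ((z.im.toNat : ℤ)) = z.re
            omega
          · show ((z.im.toNat : ℤ)) = z.im
            omega
        refine ⟨by omega, by omega, ?_⟩
        have := Nn_g ((z.re - z.im).toNat) (z.im.toNat)
        rw [hgz, h1] at this
        exact this.symm
      · ext
        · show (((z.re - z.im).toNat : ℤ)) + ((z.im.toNat : ℤ)) = z.re
          omega
        · show ((z.im.toNat : ℤ)) = z.im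
          omega
  have hTfin : T.Finite := Set.Finite.of_finite_image (hbij.image_eq ▸ hCfin) hbij.injOn
  have hTC : T.ncard = C.ncard := by
    rw [← hbij.image_eq, Set.ncard_image_of_injOn hbij.injOn]
  have hsplit : sol n = C ∪ B := by
    ext z
    simp only [sol, Set.mem_setOf_eq, Set.mem_union, hC, hB]
    constructor
    · rintro ⟨h1, h2⟩
      rcases lt_or_eq_of_le h2.1 with hlt | heq
      · exact Or.inl ⟨h1, h2, hlt⟩
      · exact Or.inr ⟨h1, h2, heq.symm⟩
    · rintro (⟨h1, h2, _⟩ | ⟨h1, h2, _⟩) <;> exact ⟨h1, h2⟩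
  have hdisj : Disjoint C B := by
    rw [Set.disjoint_left]
    rintro z ⟨-, -, hzim⟩ ⟨-, -, hzim0⟩
    omega
  have hcard : F n = C.ncard + B.ncard := by
    rw [F, hsplit, Set.ncard_union_eq hdisj hCfin hBfin]
  refine ⟨hTfin, ?_⟩
  by_cases hsq : IsSquare n
  · obtain ⟨m, hm⟩ := hsq
    have hm0 : 0 < m := by
      rcases Nat.eq_zero_or_pos m with rfl | hpos
      · omega
      · exact hpos
    have hBeq : B = {(⟨(m : ℤ), 0⟩ : Eis)} := by
      ext z
      simp only [hB, Set.mem_setOf_eq, Set.mem_singleton_iff]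
      constructor
      · rintro ⟨h1, ⟨p1, p2⟩, h3⟩
        have hNz : z.re ^ 2 - z.re * z.im + z.im ^ 2 = (n : ℤ) := by
          rw [show z.re ^ 2 - z.re * z.im + z.im ^ 2 = N z from rfl, ← coe_Nn z, h1]
        have hfac : (z.re - m) * (z.re + m) = 0 := by
          have hnm : (n : ℤ) = (m : ℤ) * m := by exact_mod_cast hm
          rw [h3] at hNz
          linear_combination hNz + hnm
        have hrepos : 0 < z.re := by omega
        have hre : z.re = (m : ℤ) := by
          rcases mul_eq_zero.1 hfac with hc | hc
          · omega
          · have : (0 : ℤ) < (m : ℤ) := by exact_mod_cast hm0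
            omega
        ext
        · exact hre
        · exact h3
      · rintro rfl
        have hNn : Nn (⟨(m : ℤ), 0⟩ : Eis) = n := by
          have h1 : N (⟨(m : ℤ), 0⟩ : Eis) = ((n : ℕ) : ℤ) := by
            show (m : ℤ) ^ 2 - (m : ℤ) * 0 + 0 ^ 2 = ((n : ℕ) : ℤ)
            rw [hm]
            push_cast
            ring
          have h2 := coe_Nn (⟨(m : ℤ), 0⟩ : Eis)
          rw [h1] at h2
          exact_mod_cast h2
        exact ⟨hNn, ⟨le_refl 0, by show (0 : ℤ) < (m : ℤ); exact_mod_cast hm0⟩, rfl⟩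
    rw [if_pos ⟨m, hm⟩, hTC, hcard, hBeq, Set.ncard_singleton]
  · have hBeq : B = ∅ := by
      ext z
      simp only [hB, Set.mem_setOf_eq, Set.mem_empty_iff_false, iff_false]
      rintro ⟨h1, ⟨p1, p2⟩, h3⟩
      apply hsq
      refine ⟨z.re.toNat, ?_⟩
      have hNz : z.re ^ 2 - z.re * z.im + z.im ^ 2 = (n : ℤ) := by
        rw [show z.re ^ 2 - z.re * z.im + z.im ^ 2 = N z from rfl, ← coe_Nn z, h1]
      have h4 : (n : ℤ) = z.re ^ 2 := by rw [← hNz, h3]; ring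
      have h5 : (n : ℤ) = (z.re.toNat : ℤ) * (z.re.toNat : ℤ) := by
        rw [h4]
        have : (z.re.toNat : ℤ) = z.re := by omega
        rw [this]
        ring
      exact_mod_cast h5
    rw [if_neg hsq, hTC, hcard, hBeq, Set.ncard_empty]

end Eis
end EisCount

theorem stmt_2 (n : ℕ) (hn : 0 < n)
    (h : ∀ q : ℕ, q.Prime → q % 3 = 2 → Even (n.factorization q)) :
    {z : ℕ × ℕ | 0 < z.1 ∧ 0 < z.2 ∧ z.1 ^ 2 + z.1 * z.2 + z.2 ^ 2 = n}.Finite ∧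
      (IsSquare n →
        {z : ℕ × ℕ | 0 < z.1 ∧ 0 < z.2 ∧ z.1 ^ 2 + z.1 * z.2 + z.2 ^ 2 = n}.ncard =
          (∏ p ∈ n.primeFactors.filter (fun p => p % 3 = 1), (n.factorization p + 1)) - 1) ∧
      (¬ IsSquare n →
        {z : ℕ × ℕ | 0 < z.1 ∧ 0 < z.2 ∧ z.1 ^ 2 + z.1 * z.2 + z.2 ^ 2 = n}.ncard =
          ∏ p ∈ n.primeFactors.filter (fun p => p % 3 = 1), (n.factorization p + 1)) := by
  obtain ⟨hfin, hcount⟩ := EisCount.Eis.main_count n hn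
  have hF := EisCount.Eis.F_formula n hn h
  refine ⟨hfin, ?_, ?_⟩
  · intro hsq
    rw [if_pos hsq] at hcount
    omega
  · intro hsq
    rw [if_neg hsq] at hcount
    omega
end

section
/- For every positive integer d, the set of positive integers n for which the number of ordered pairs (a,b) of positive integers with a² + a·b + b² = n is exactly d, is infinite. -/
namespace Stmt3Aux

def nm (z : ℤ × ℤ) : ℤ := z.1^2 - z.1*z.2 + z.2^2
def em (z w : ℤ × ℤ) : ℤ × ℤ := (z.1*w.1 - z.2*w.2, z.1*w.2 + z.2*w.1 - z.2*w.2)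
def pi7 : ℤ × ℤ := (3, 1)
def pib : ℤ × ℤ := (2, -1)
def T (n : ℤ) : Set (ℤ × ℤ) := {z | nm z = n}
def S (n : ℤ) : Set (ℤ × ℤ) := {z | z.2 < z.1 ∧ 0 < z.2 ∧ nm z = n}
def f1 (z : ℤ × ℤ) : ℤ × ℤ := (z.1 - z.2, z.1)
def f2 (z : ℤ × ℤ) : ℤ × ℤ := (-z.2, z.1 - z.2)
def f3 (z : ℤ × ℤ) : ℤ × ℤ := (-z.1, -z.2)
def f4 (z : ℤ × ℤ) : ℤ × ℤ := (z.2 - z.1, -z.1)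
def f5 (z : ℤ × ℤ) : ℤ × ℤ := (z.2, z.2 - z.1)

lemma nm_em (z w : ℤ × ℤ) : nm (em z w) = nm z * nm w := by simp [nm, em]; ring

lemma T_finite {n : ℤ} (hn : 0 < n) : (T n).Finite := by
  have hsub : T n ⊆ Set.Icc (-(2*n)) (2*n) ×ˢ Set.Icc (-(2*n)) (2*n) := by
    rintro ⟨x, y⟩ hz
    simp only [T, nm, Set.mem_setOf_eq] at hz
    have h1 : x^2 ≤ 2*n := by nlinarith [sq_nonneg (x-y), sq_nonneg y]
    have h2 : y^2 ≤ 2*n := by nlinarith [sq_nonneg (x-y), sq_nonneg x]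
    constructor <;> constructor <;> nlinarith [sq_nonneg (x+1), sq_nonneg (x-1), sq_nonneg (y+1), sq_nonneg (y-1)]
  exact Set.Finite.subset (Set.Finite.prod (Set.finite_Icc _ _) (Set.finite_Icc _ _)) hsub

lemma S_subset_T (n : ℤ) : S n ⊆ T n := fun _ hz => hz.2.2

lemma split {z : ℤ × ℤ} (h : (7:ℤ) ∣ nm z) :
    (∃ w, z = em pi7 w) ∨ (∃ w, z = em pib w) := by
  obtain ⟨x, y⟩ := z
  simp only [nm] at h
  have key : (7:ℤ) ∣ (y - 3*x) * (y - 5*x) := by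
    obtain ⟨c, hc⟩ := h
    exact ⟨2*x^2 - x*y + c, by linarith [hc]⟩
  have h7 : Prime (7:ℤ) := by norm_num
  rcases h7.dvd_mul.mp key with h1 | h1
  · right
    obtain ⟨k, hk⟩ := h1
    obtain ⟨p, hp⟩ : (7:ℤ) ∣ 3*x - y := by omega
    obtain ⟨q, hq⟩ : (7:ℤ) ∣ x + 2*y := by omega
    exact ⟨(p, q), by simp only [em, pib, Prod.mk.injEq]; constructor <;> linarith⟩
  · left
    obtain ⟨k, hk⟩ := h1
    obtain ⟨p, hp⟩ : (7:ℤ) ∣ 2*x + y := by omega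
    obtain ⟨q, hq⟩ : (7:ℤ) ∣ -x + 3*y := by omega
    exact ⟨(p, q), by simp only [em, pi7, Prod.mk.injEq]; constructor <;> linarith⟩

lemma both {z : ℤ × ℤ} (h1 : ∃ w, z = em pi7 w) (h2 : ∃ w, z = em pib w) :
    ∃ u : ℤ × ℤ, z = (7*u.1, 7*u.2) := by
  obtain ⟨⟨a, b⟩, rfl⟩ := h1
  obtain ⟨⟨c, d⟩, h⟩ := h2
  simp only [em, pi7, pib, Prod.mk.injEq] at h ⊢
  obtain ⟨e1, e2⟩ := h
  obtain ⟨p, hp⟩ : (7:ℤ) ∣ 3*a - b := by omega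
  obtain ⟨q, hq⟩ : (7:ℤ) ∣ a + 2*b := by omega
  exact ⟨(p, q), by constructor <;> linarith⟩

lemma em_pi7_inj : Function.Injective (em pi7) := by
  rintro ⟨a, b⟩ ⟨c, d⟩ h
  simp only [em, pi7, Prod.mk.injEq] at h ⊢
  omega

lemma em_pib_inj : Function.Injective (em pib) := by
  rintro ⟨a, b⟩ ⟨c, d⟩ h
  simp only [em, pib, Prod.mk.injEq] at h ⊢
  omega

lemma nm_pi7 : nm pi7 = 7 := by simp [nm, pi7]
lemma nm_pib : nm pib = 7 := by simp [nm, pib]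

lemma T7_union (n : ℤ) : T (7*n) = em pi7 '' T n ∪ em pib '' T n := by
  ext z
  constructor
  · intro hz
    have h7 : (7:ℤ) ∣ nm z := ⟨n, hz⟩
    rcases split h7 with ⟨w, rfl⟩ | ⟨w, rfl⟩
    · left
      refine ⟨w, ?_, rfl⟩
      have h := nm_em pi7 w
      rw [nm_pi7] at h
      simp only [T, Set.mem_setOf_eq] at hz ⊢
      rw [h] at hz; linarith
    · right
      refine ⟨w, ?_, rfl⟩
      have h := nm_em pib w
      rw [nm_pib] at h
      simp only [T, Set.mem_setOf_eq] at hz ⊢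
      rw [h] at hz; linarith
  · rintro (⟨w, hw, rfl⟩ | ⟨w, hw, rfl⟩) <;>
      simp only [T, Set.mem_setOf_eq, nm_em, nm_pi7, nm_pib] at hw ⊢ <;> rw [hw]

lemma id_pi_pib (u : ℤ × ℤ) : ((7*u.1, 7*u.2) : ℤ × ℤ) = em pi7 (em pib u) := by
  simp only [em, pi7, pib, Prod.mk.injEq]; constructor <;> ring

lemma id_pib_pi (u : ℤ × ℤ) : ((7*u.1, 7*u.2) : ℤ × ℤ) = em pib (em pi7 u) := by
  simp only [em, pi7, pib, Prod.mk.injEq]; constructor <;> ring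

lemma T7_inter (n : ℤ) :
    (em pi7 '' T n) ∩ (em pib '' T n) = (fun u : ℤ × ℤ => (7*u.1, 7*u.2)) '' {u | 49 * nm u = 7 * n} := by
  ext z
  constructor
  · rintro ⟨⟨w, hw, rfl⟩, h2⟩
    obtain ⟨u, hu⟩ := both ⟨w, rfl⟩ (by obtain ⟨w', hw', h⟩ := h2; exact ⟨w', h.symm⟩)
    refine ⟨u, ?_, hu.symm⟩
    have : nm (em pi7 w) = 49 * nm u := by
      rw [hu]; show nm ((fun u : ℤ × ℤ => (7*u.1, 7*u.2)) u) = _; simp [nm]; ring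
    simp only [Set.mem_setOf_eq]
    rw [← this, nm_em, nm_pi7]
    simp only [T, Set.mem_setOf_eq] at hw; rw [hw]
  · rintro ⟨u, hu, rfl⟩
    simp only [Set.mem_setOf_eq] at hu
    have hnmu : 7 * nm u = n := by linarith
    constructor
    · exact ⟨em pib u, by simp only [T, Set.mem_setOf_eq, nm_em, nm_pib]; linarith, (id_pi_pib u).symm⟩
    · exact ⟨em pi7 u, by simp only [T, Set.mem_setOf_eq, nm_em, nm_pi7]; linarith, (id_pib_pi u).symm⟩

-- the recurrence
lemma card_T7 (n : ℤ) (hn : 0 < n) :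
    (T (7*n)).ncard + ({u : ℤ × ℤ | 49 * nm u = 7 * n}).ncard = 2 * (T n).ncard := by
  have hA : (em pi7 '' T n).ncard = (T n).ncard := Set.ncard_image_of_injective _ em_pi7_inj
  have hB : (em pib '' T n).ncard = (T n).ncard := Set.ncard_image_of_injective _ em_pib_inj
  have hfin : (T n).Finite := T_finite hn
  have hI : ({u : ℤ × ℤ | 49 * nm u = 7 * n}).ncard
      = ((fun u : ℤ × ℤ => (7*u.1, 7*u.2)) '' {u | 49 * nm u = 7 * n}).ncard := by
    rw [Set.ncard_image_of_injective]
    rintro ⟨a,b⟩ ⟨c,d⟩ h; simp only [Prod.mk.injEq] at h ⊢; omega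
  rw [T7_union, hI, ← T7_inter, Set.ncard_union_add_ncard_inter _ _ (hfin.image _) (hfin.image _), hA, hB]
  ring

lemma nm_f1 (z) : nm (f1 z) = nm z := by simp only [nm, f1]; ring
lemma nm_f2 (z) : nm (f2 z) = nm z := by simp only [nm, f2]; ring
lemma nm_f3 (z) : nm (f3 z) = nm z := by simp only [nm, f3]; ring
lemma nm_f4 (z) : nm (f4 z) = nm z := by simp only [nm, f4]; ring
lemma nm_f5 (z) : nm (f5 z) = nm z := by simp only [nm, f5]; ring

lemma nondeg {n : ℤ} (hsq : ∀ t : ℤ, n ≠ t^2) {z : ℤ × ℤ} (hz : z ∈ T n) :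
    z.1 ≠ 0 ∧ z.2 ≠ 0 ∧ z.1 ≠ z.2 := by
  obtain ⟨x, y⟩ := z
  simp only [T, nm, Set.mem_setOf_eq] at hz
  refine ⟨fun h => hsq y ?_, fun h => hsq x ?_, fun h => hsq x ?_⟩ <;> simp only at h <;>
    subst h <;> linarith [hz]

lemma mem_S {n : ℤ} {a b : ℤ} (h1 : b < a) (h2 : 0 < b) (h3 : a^2 - a*b + b^2 = n) :
    (a, b) ∈ S n := ⟨h1, h2, h3⟩

lemma cover {n : ℤ} (hsq : ∀ t : ℤ, n ≠ t^2) {z : ℤ × ℤ} (hz : z ∈ T n) :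
    z ∈ S n ∪ (f1 '' S n ∪ (f2 '' S n ∪ (f3 '' S n ∪ (f4 '' S n ∪ f5 '' S n)))) := by
  obtain ⟨hx, hy, hxy⟩ := nondeg hsq hz
  obtain ⟨x, y⟩ := z
  simp only [T, nm, Set.mem_setOf_eq] at hz
  simp only at hx hy hxy
  rcases lt_trichotomy y 0 with hy' | hy' | hy'
  · rcases lt_trichotomy x 0 with hx' | hx' | hx'
    · rcases lt_trichotomy (x - y) 0 with hd | hd | hd
      · right; right; right; left
        refine ⟨(-x, -y), mem_S (by omega) (by omega) (by linear_combination hz), ?_⟩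
        simp only [f3]; ring_nf
      · omega
      · right; right; right; right; left
        refine ⟨(-y, x - y), mem_S (by omega) (by omega) (by linear_combination hz), ?_⟩
        simp only [f4, Prod.mk.injEq]; constructor <;> ring
    · omega
    · right; right; right; right; right
      refine ⟨(x - y, x), mem_S (by omega) (by omega) (by linear_combination hz), ?_⟩
      ext <;> simp only [f5] <;> ring
  · omega
  · rcases lt_trichotomy (x - y) 0 with hd | hd | hd
    · rcases lt_trichotomy x 0 with hx' | hx' | hx'
      · right; right; left
        refine ⟨(y - x, -x), mem_S (by omega) (by omega) (by linear_combination hz), ?_⟩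
        simp only [f2, Prod.mk.injEq]; constructor <;> ring
      · omega
      · right; left
        refine ⟨(y, y - x), mem_S (by omega) (by omega) (by linear_combination hz), ?_⟩
        ext <;> simp only [f1] <;> ring
    · omega
    · left; exact mem_S (by omega) (by omega) hz

-- sign pattern lemmas: for z in each piece, signs of (z.2, z.1 - z.2, z.1)
lemma patS {n : ℤ} {z : ℤ × ℤ} (h : z ∈ S n) : 0 < z.2 ∧ 0 < z.1 - z.2 ∧ 0 < z.1 := by
  obtain ⟨h1, h2, _⟩ := h; omega
lemma pat1 {n : ℤ} {z : ℤ × ℤ} (h : z ∈ f1 '' S n) : 0 < z.2 ∧ z.1 - z.2 < 0 ∧ 0 < z.1 := by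
  obtain ⟨⟨a, b⟩, ⟨h1, h2, _⟩, rfl⟩ := h; simp only [f1]; simp only at h1 h2; omega
lemma pat2 {n : ℤ} {z : ℤ × ℤ} (h : z ∈ f2 '' S n) : 0 < z.2 ∧ z.1 - z.2 < 0 ∧ z.1 < 0 := by
  obtain ⟨⟨a, b⟩, ⟨h1, h2, _⟩, rfl⟩ := h; simp only [f2]; simp only at h1 h2; omega
lemma pat3 {n : ℤ} {z : ℤ × ℤ} (h : z ∈ f3 '' S n) : z.2 < 0 ∧ z.1 - z.2 < 0 ∧ z.1 < 0 := by
  obtain ⟨⟨a, b⟩, ⟨h1, h2, _⟩, rfl⟩ := h; simp only [f3]; simp only at h1 h2; omega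
lemma pat4 {n : ℤ} {z : ℤ × ℤ} (h : z ∈ f4 '' S n) : z.2 < 0 ∧ 0 < z.1 - z.2 ∧ z.1 < 0 := by
  obtain ⟨⟨a, b⟩, ⟨h1, h2, _⟩, rfl⟩ := h; simp only [f4]; simp only at h1 h2; omega
lemma pat5 {n : ℤ} {z : ℤ × ℤ} (h : z ∈ f5 '' S n) : z.2 < 0 ∧ 0 < z.1 - z.2 ∧ 0 < z.1 := by
  obtain ⟨⟨a, b⟩, ⟨h1, h2, _⟩, rfl⟩ := h; simp only [f5]; simp only at h1 h2; omega

lemma T_eq_six {n : ℤ} (hsq : ∀ t : ℤ, n ≠ t^2) :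
    T n = S n ∪ (f1 '' S n ∪ (f2 '' S n ∪ (f3 '' S n ∪ (f4 '' S n ∪ f5 '' S n)))) := by
  apply Set.Subset.antisymm
  · exact fun z hz => cover hsq hz
  · rintro z (hz | hz | hz | hz | hz | hz)
    · exact S_subset_T n hz
    · obtain ⟨s, hs, rfl⟩ := hz; exact (nm_f1 s).trans hs.2.2
    · obtain ⟨s, hs, rfl⟩ := hz; exact (nm_f2 s).trans hs.2.2
    · obtain ⟨s, hs, rfl⟩ := hz; exact (nm_f3 s).trans hs.2.2
    · obtain ⟨s, hs, rfl⟩ := hz; exact (nm_f4 s).trans hs.2.2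
    · obtain ⟨s, hs, rfl⟩ := hz; exact (nm_f5 s).trans hs.2.2

lemma card_T_six {n : ℤ} (hn : 0 < n) (hsq : ∀ t : ℤ, n ≠ t^2) :
    (T n).ncard = 6 * (S n).ncard := by
  have hTfin := T_finite hn
  have hT := T_eq_six hsq
  have hSfin : (S n).Finite := hTfin.subset (S_subset_T n)
  have c1 : (f1 '' S n).ncard = (S n).ncard := by
    apply Set.ncard_image_of_injective
    rintro ⟨a, b⟩ ⟨c, d⟩ h; simp only [f1, Prod.mk.injEq] at h ⊢; omega
  have c2 : (f2 '' S n).ncard = (S n).ncard := by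
    apply Set.ncard_image_of_injective
    rintro ⟨a, b⟩ ⟨c, d⟩ h; simp only [f2, Prod.mk.injEq] at h ⊢; omega
  have c3 : (f3 '' S n).ncard = (S n).ncard := by
    apply Set.ncard_image_of_injective
    rintro ⟨a, b⟩ ⟨c, d⟩ h; simp only [f3, Prod.mk.injEq] at h ⊢; omega
  have c4 : (f4 '' S n).ncard = (S n).ncard := by
    apply Set.ncard_image_of_injective
    rintro ⟨a, b⟩ ⟨c, d⟩ h; simp only [f4, Prod.mk.injEq] at h ⊢; omega
  have c5 : (f5 '' S n).ncard = (S n).ncard := by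
    apply Set.ncard_image_of_injective
    rintro ⟨a, b⟩ ⟨c, d⟩ h; simp only [f5, Prod.mk.injEq] at h ⊢; omega
  have fin1 : (f1 '' S n).Finite := hSfin.image _
  have fin2 : (f2 '' S n).Finite := hSfin.image _
  have fin3 : (f3 '' S n).Finite := hSfin.image _
  have fin4 : (f4 '' S n).Finite := hSfin.image _
  have fin5 : (f5 '' S n).Finite := hSfin.image _
  have d45 : Disjoint (f4 '' S n) (f5 '' S n) := by
    rw [Set.disjoint_left]; intro z h4 h5; have := pat4 h4; have := pat5 h5; omega
  have d345 : Disjoint (f3 '' S n) (f4 '' S n ∪ f5 '' S n) := by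
    rw [Set.disjoint_left]; rintro z h3 (h | h)
    · have := pat3 h3; have := pat4 h; omega
    · have := pat3 h3; have := pat5 h; omega
  have d2345 : Disjoint (f2 '' S n) (f3 '' S n ∪ (f4 '' S n ∪ f5 '' S n)) := by
    rw [Set.disjoint_left]; rintro z h2 (h | h | h)
    · have := pat2 h2; have := pat3 h; omega
    · have := pat2 h2; have := pat4 h; omega
    · have := pat2 h2; have := pat5 h; omega
  have d12345 : Disjoint (f1 '' S n) (f2 '' S n ∪ (f3 '' S n ∪ (f4 '' S n ∪ f5 '' S n))) := by
    rw [Set.disjoint_left]; rintro z h1 (h | h | h | h)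
    · have := pat1 h1; have := pat2 h; omega
    · have := pat1 h1; have := pat3 h; omega
    · have := pat1 h1; have := pat4 h; omega
    · have := pat1 h1; have := pat5 h; omega
  have d012345 : Disjoint (S n) (f1 '' S n ∪ (f2 '' S n ∪ (f3 '' S n ∪ (f4 '' S n ∪ f5 '' S n)))) := by
    rw [Set.disjoint_left]; rintro z h0 (h | h | h | h | h)
    · have := patS h0; have := pat1 h; omega
    · have := patS h0; have := pat2 h; omega
    · have := patS h0; have := pat3 h; omega
    · have := patS h0; have := pat4 h; omega
    · have := patS h0; have := pat5 h; omega
  rw [hT,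
    Set.ncard_union_eq d012345 hSfin (fin1.union (fin2.union (fin3.union (fin4.union fin5)))),
    Set.ncard_union_eq d12345 fin1 (fin2.union (fin3.union (fin4.union fin5))),
    Set.ncard_union_eq d2345 fin2 (fin3.union (fin4.union fin5)),
    Set.ncard_union_eq d345 fin3 (fin4.union fin5),
    Set.ncard_union_eq d45 fin4 fin5, c1, c2, c3, c4, c5]
  ring

lemma even_of_nm_four {m : ℤ} {z : ℤ × ℤ} (h : nm z = 4 * m) :
    ∃ u : ℤ × ℤ, z = (2*u.1, 2*u.2) ∧ nm u = m := by
  obtain ⟨x, y⟩ := z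
  simp only [nm] at h
  have hpar : Even x ∧ Even y := by
    by_contra hc
    rcases Int.even_or_odd x with ⟨a, ha⟩ | ⟨a, ha⟩ <;>
      rcases Int.even_or_odd y with ⟨b, hb⟩ | ⟨b, hb⟩
    · exact hc ⟨⟨a, by omega⟩, ⟨b, by omega⟩⟩
    · obtain ⟨t, ht⟩ : ∃ t, a^2 - a*b + b^2 = t := ⟨_, rfl⟩
      have h2 : 4*m = 4*t - 2*a + 4*b + 1 := by rw [← ht, ← h, ha, hb]; ring
      omega
    · obtain ⟨t, ht⟩ : ∃ t, a^2 - a*b + b^2 = t := ⟨_, rfl⟩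
      have h2 : 4*m = 4*t + 4*a - 2*b + 1 := by rw [← ht, ← h, ha, hb]; ring
      omega
    · obtain ⟨t, ht⟩ : ∃ t, a^2 - a*b + b^2 = t := ⟨_, rfl⟩
      have h2 : 4*m = 4*t + 2*a + 2*b + 1 := by rw [← ht, ← h, ha, hb]; ring
      omega
  obtain ⟨⟨a, ha⟩, ⟨b, hb⟩⟩ := hpar
  refine ⟨(a, b), by simp only [Prod.mk.injEq]; omega, ?_⟩
  have h2 : 4 * nm (a, b) = 4 * m := by simp only [nm]; rw [← h, ha, hb]; ring
  omega

lemma S_four (m : ℤ) : S (4*m) = (fun u : ℤ × ℤ => (2*u.1, 2*u.2)) '' S m := by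
  ext z
  constructor
  · rintro ⟨h1, h2, h3⟩
    obtain ⟨u, rfl, hu⟩ := even_of_nm_four h3
    exact ⟨u, ⟨by simp only at h1 ⊢; omega, by simp only at h2 ⊢; omega, hu⟩, rfl⟩
  · rintro ⟨⟨a, b⟩, ⟨h1, h2, h3⟩, rfl⟩
    simp only at h1 h2
    refine ⟨by simp only; omega, by simp only; omega, ?_⟩
    simp only [nm] at h3 ⊢
    linear_combination 4 * h3

lemma card_S_four (m : ℤ) : (S (4*m)).ncard = (S m).ncard := by
  rw [S_four, Set.ncard_image_of_injective]
  rintro ⟨a, b⟩ ⟨c, d⟩ h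
  simp only [Prod.mk.injEq] at h ⊢
  omega

-- x = 2a case parity typo check done above
lemma wave_x_case : True := trivial

lemma nonsq_pow (k : ℕ) : ∀ t : ℤ, 3 * 7^k ≠ t^2 := by
  intro t ht
  have h3 : (3:ℤ) ∣ t^2 := ⟨7^k, by linarith⟩
  have hp : Prime (3:ℤ) := by norm_num
  have h3t : (3:ℤ) ∣ t := hp.dvd_of_dvd_pow h3
  obtain ⟨u, rfl⟩ := h3t
  have ht' : (3:ℤ) * 7^k = 9 * u^2 := by linear_combination ht
  have h9 : (3:ℤ) ∣ 7^k := ⟨u^2, by linarith⟩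
  have h7 : (3:ℤ) ∣ 7 := hp.dvd_of_dvd_pow h9
  norm_num at h7

lemma card_S_three : (S 3).ncard = 1 := by
  have : S 3 = {((2:ℤ), (1:ℤ))} := by
    ext ⟨x, y⟩
    simp only [S, nm, Set.mem_setOf_eq, Set.mem_singleton_iff, Prod.mk.injEq]
    constructor
    · rintro ⟨h1, h2, h3⟩
      have hx : x ≤ 2 := by nlinarith
      have hy : y = 1 := by nlinarith
      constructor <;> nlinarith
    · rintro ⟨rfl, rfl⟩
      norm_num
  rw [this, Set.ncard_singleton]

-- main count: (T (3*7^k)).ncard = 6*(k+1)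
lemma pos37 (k : ℕ) : (0:ℤ) < 3 * 7^k := by positivity

lemma card_T_37 : ∀ k : ℕ, (T (3 * 7^k)).ncard = 6 * (k + 1) := by
  have key : ∀ k : ℕ, (T (3 * 7^(k+1))).ncard + ({u : ℤ × ℤ | 49 * nm u = 7 * (3 * 7^k)}).ncard
      = 2 * (T (3 * 7^k)).ncard := by
    intro k
    have := card_T7 (3 * 7^k) (pos37 k)
    have he : (7:ℤ) * (3 * 7^k) = 3 * 7^(k+1) := by ring
    rw [he] at this
    convert this using 3
    rw [he]
  intro k
  induction k using Nat.strong_induction_on with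
  | _ k ih =>
    match k with
    | 0 =>
      rw [card_T_six (pos37 0) (nonsq_pow 0)]
      simp only [pow_zero, mul_one]
      rw [card_S_three]
    | 1 =>
      have h0 := key 0
      have hI : ({u : ℤ × ℤ | 49 * nm u = 7 * (3 * 7^0)}).ncard = 0 := by
        convert Set.ncard_empty (ℤ × ℤ)
        ext u
        simp only [Set.mem_setOf_eq, Set.mem_empty_iff_false, iff_false]
        intro h
        have he : (7:ℤ) * (3 * 7^0) = 21 := by norm_num
        rw [he] at h
        omega
      rw [hI] at h0
      have h00 : (T (3 * 7^0)).ncard = 6 * (0 + 1) := ih 0 (by norm_num)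
      have e : 0 + 1 = 1 := rfl
      rw [e] at h0
      omega
    | (k+2) =>
      have hk := key (k+1)
      have hI : ({u : ℤ × ℤ | 49 * nm u = 7 * (3 * 7^(k+1))}).ncard = (T (3 * 7^k)).ncard := by
        congr 1
        ext u
        simp only [Set.mem_setOf_eq, T]
        constructor
        · intro h
          have : (49:ℤ) * nm u = 49 * (3 * 7^k) := by rw [h]; ring
          linarith
        · intro h; rw [h]; ring
      rw [hI] at hk
      have e : k + 1 + 1 = k + 2 := by omega
      rw [e] at hk
      have h1 := ih (k+1) (by omega)
      have h2 := ih k (by omega)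
      omega

lemma card_S_37 (k : ℕ) : (S (3 * 7^k)).ncard = k + 1 := by
  have h := card_T_37 k
  rw [card_T_six (pos37 k) (nonsq_pow k)] at h
  omega

lemma card_S_main (k j : ℕ) : (S (4^j * (3 * 7^k))).ncard = k + 1 := by
  induction j with
  | zero => simpa using card_S_37 k
  | succ j ih =>
    have he : (4:ℤ)^(j+1) * (3 * 7^k) = 4 * (4^j * (3 * 7^k)) := by ring
    rw [he, card_S_four]
    exact ih


def P (n : ℕ) : Set (ℕ × ℕ) := {z : ℕ × ℕ | 0 < z.1 ∧ 0 < z.2 ∧ z.1 ^ 2 + z.1 * z.2 + z.2 ^ 2 = n}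

def g (p : ℕ × ℕ) : ℤ × ℤ := ((p.1 : ℤ) + p.2, (p.2 : ℤ))

lemma g_inj : Function.Injective g := by
  rintro ⟨a, b⟩ ⟨c, d⟩ h
  simp only [g, Prod.mk.injEq] at h ⊢
  omega

lemma g_image (n : ℕ) : g '' P n = S (n : ℤ) := by
  ext z
  constructor
  · rintro ⟨⟨a, b⟩, ⟨h1, h2, h3⟩, rfl⟩
    simp only at h1 h2 h3
    refine ⟨?_, ?_, ?_⟩
    · simp only [g]; push_cast; omega
    · simp only [g]; push_cast; omega
    · simp only [g, nm]
      have hc : ((a ^ 2 + a * b + b ^ 2 : ℕ) : ℤ) = (n : ℤ) := by rw [h3]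
      push_cast at hc
      linear_combination hc
  · intro hz
    obtain ⟨x, y⟩ := z
    obtain ⟨h1, h2, h3⟩ := hz
    simp only at h1 h2
    simp only [nm] at h3
    refine ⟨((x - y).toNat, y.toNat), ⟨?_, ?_, ?_⟩, ?_⟩
    · simp only; omega
    · simp only; omega
    · have ha : (((x - y).toNat : ℤ)) = x - y := Int.toNat_of_nonneg (by omega)
      have hb : ((y.toNat : ℤ)) = y := Int.toNat_of_nonneg (by omega)
      have : (((x - y).toNat ^ 2 + (x - y).toNat * y.toNat + y.toNat ^ 2 : ℕ) : ℤ) = (n : ℤ) := by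
        push_cast
        rw [ha, hb]
        linear_combination h3
      exact_mod_cast this
    · have ha : (((x - y).toNat : ℤ)) = x - y := Int.toNat_of_nonneg (by omega)
      have hb : ((y.toNat : ℤ)) = y := Int.toNat_of_nonneg (by omega)
      simp only [g, Prod.mk.injEq]
      constructor
      · rw [ha, hb]; ring
      · exact hb

lemma card_P (n : ℕ) : (P n).ncard = (S (n : ℤ)).ncard := by
  rw [← g_image n, Set.ncard_image_of_injective _ g_inj]

end Stmt3Aux

theorem stmt_3 (d : ℕ) (hd : 0 < d) :
    {n : ℕ | 0 < n ∧
      {z : ℕ × ℕ | 0 < z.1 ∧ 0 < z.2 ∧ z.1 ^ 2 + z.1 * z.2 + z.2 ^ 2 = n}.ncard = d}.Infinite := by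
  apply Set.infinite_of_injective_forall_mem
    (f := fun j : ℕ => 3 * 7 ^ (d - 1) * 4 ^ j)
  · intro a b h
    simp only at h
    have h4 : (0:ℕ) < 3 * 7 ^ (d - 1) := by positivity
    have := Nat.eq_of_mul_eq_mul_left h4 h
    exact Nat.pow_right_injective (by norm_num) this
  · intro j
    constructor
    · positivity
    · have hcast : ((3 * 7 ^ (d - 1) * 4 ^ j : ℕ) : ℤ) = 4 ^ j * (3 * 7 ^ (d - 1)) := by
        push_cast; ring
      have := Stmt3Aux.card_P (3 * 7 ^ (d - 1) * 4 ^ j)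
      rw [hcast, Stmt3Aux.card_S_main (d - 1) j] at this
      have he : d - 1 + 1 = d := by omega
      rw [he] at this
      exact this
end

section
/- Let k and l be positive integers. Then the function φ satisfies φ'''(x) + φ'(x) + i·λ·φ(x) = 0 for every x ∈ ℝ, and moreover φ(0) = φ(L) = 0 and φ'(0) = φ'(L) = 0. -/
noncomputable section

/-- `n = k² + k·l + l²` as a real number. -/
def nR (k l : ℕ) : ℝ := ((k ^ 2 + k * l + l ^ 2 : ℕ) : ℝ)

/-- The critical length `L = 2π√(n/3)`. -/
def LL (k l : ℕ) : ℝ := 2 * Real.pi * Real.sqrt (nR k l / 3)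

/-- `λ = (2k+l)(k−l)(2l+k)/(3√3 n^{3/2})`. -/
def lam (k l : ℕ) : ℝ :=
  ((2 * k + l : ℕ) : ℝ) * ((k : ℝ) - (l : ℝ)) * ((2 * l + k : ℕ) : ℝ) /
    (3 * Real.sqrt 3 * nR k l ^ ((3 : ℝ) / 2))

/-- The Type 1 eigenfunction `φ`. -/
def phi (k l : ℕ) : ℝ → ℂ := fun x =>
  -Complex.exp (Complex.I *
      ((x * (Real.sqrt 3 * ((2 * k + l : ℕ) : ℝ)) / (3 * Real.sqrt (nR k l)) : ℝ) : ℂ))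
  - ((k : ℂ) / (l : ℂ)) * Complex.exp (-(Complex.I *
      ((x * (Real.sqrt 3 * ((k + 2 * l : ℕ) : ℝ)) / (3 * Real.sqrt (nR k l)) : ℝ) : ℂ)))
  + (((k : ℂ) + (l : ℂ)) / (l : ℂ)) * Complex.exp (Complex.I *
      ((x * (Real.sqrt 3 * ((l : ℝ) - (k : ℝ))) / (3 * Real.sqrt (nR k l)) : ℝ) : ℂ))

/-- The Type 2 eigenfunction `φ̃`. -/
def phiT (k l : ℕ) : ℝ → ℂ := fun x =>
  Complex.exp (Complex.I *
      ((x * (Real.sqrt 3 * ((2 * k + l : ℕ) : ℝ)) / (3 * Real.sqrt (nR k l)) : ℝ) : ℂ))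
  - Complex.exp (-(Complex.I *
      ((x * (Real.sqrt 3 * ((k + 2 * l : ℕ) : ℝ)) / (3 * Real.sqrt (nR k l)) : ℝ) : ℂ)))

end

noncomputable section StmtAux

lemma hasDerivAt_cexp_mul' (A : ℂ) (x : ℝ) :
    HasDerivAt (fun t : ℝ => Complex.exp (A * t)) (A * Complex.exp (A * x)) x := by
  have h := (((hasDerivAt_id (x:ℂ)).const_mul A).cexp).comp_ofReal
  simpa [mul_comm] using h

def comb' (p q r A B C : ℂ) : ℝ → ℂ := fun t =>
  p * Complex.exp (A * t) + q * Complex.exp (B * t) + r * Complex.exp (C * t)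

lemma hasDerivAt_comb' (p q r A B C : ℂ) (x : ℝ) :
    HasDerivAt (comb' p q r A B C) (comb' (p*A) (q*B) (r*C) A B C x) x := by
  have h := (((hasDerivAt_cexp_mul' A x).const_mul p).add
    ((hasDerivAt_cexp_mul' B x).const_mul q)).add ((hasDerivAt_cexp_mul' C x).const_mul r)
  simp only [comb']
  convert h using 1
  · rfl
  · rfl
  · ring

lemma deriv_comb' (p q r A B C : ℂ) :
    deriv (comb' p q r A B C) = comb' (p*A) (q*B) (r*C) A B C := by
  funext x; exact (hasDerivAt_comb' p q r A B C x).deriv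

def tA' (k l : ℕ) : ℝ := Real.sqrt 3 * (2*(k:ℝ)+l) / (3 * Real.sqrt (nR k l))
def tB' (k l : ℕ) : ℝ := -(Real.sqrt 3 * ((k:ℝ)+2*l) / (3 * Real.sqrt (nR k l)))
def tC' (k l : ℕ) : ℝ := Real.sqrt 3 * ((l:ℝ)-(k:ℝ)) / (3 * Real.sqrt (nR k l))

lemma phi_eq' (k l : ℕ) : phi k l = comb' (-1) (-((k:ℂ)/l)) (((k:ℂ)+l)/l)
    (Complex.I * ((tA' k l : ℝ):ℂ)) (Complex.I * ((tB' k l : ℝ):ℂ))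
    (Complex.I * ((tC' k l : ℝ):ℂ)) := by
  funext x
  simp only [phi, comb', tA', tB', tC']
  push_cast
  ring_nf

lemma cube_root_lemma' (sn s3 t lamv u : ℝ) (hsn0 : sn ≠ 0) (hs30 : s3 ≠ 0)
    (hs3 : s3^2 = 3) (ht : t = s3*u/(3*sn)) (hv : lamv * (3*s3*sn^3) = u*(u^2 - 3*sn^2)) :
    t^3 - t = lamv := by
  subst ht
  have h : (s3*u/(3*sn))^3 - s3*u/(3*sn) = u*(u^2 - 3*(sn^2))/(3*s3*sn^3) := by
    field_simp
    linear_combination (u^3*(s3^2+3) - 9*u*sn^2) * hs3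
  have hD : (3:ℝ)*s3*sn^3 ≠ 0 :=
    mul_ne_zero (mul_ne_zero three_ne_zero hs30) (pow_ne_zero 3 hsn0)
  rw [h]
  exact (div_eq_iff hD).mpr hv.symm

lemma root_complex' (t lamv : ℝ) (ht : t^3 - t = lamv) :
    (Complex.I*(t:ℂ))^3 + Complex.I*(t:ℂ) + Complex.I*((lamv : ℝ):ℂ) = 0 := by
  have ht' : (t:ℂ)^3 - (t:ℂ) = ((lamv : ℝ):ℂ) := by exact_mod_cast congrArg Complex.ofReal ht
  have hI : (Complex.I)^2 = -1 := Complex.I_sq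
  linear_combination (-Complex.I) * ht' + (t:ℂ)^3 * Complex.I * hI

end StmtAux

theorem stmt_4 (k l : ℕ) (hk : 0 < k) (hl : 0 < l) :
    (∀ x : ℝ, deriv (deriv (deriv (phi k l))) x + deriv (phi k l) x
        + Complex.I * ((lam k l : ℝ) : ℂ) * phi k l x = 0) ∧
    phi k l 0 = 0 ∧ phi k l (LL k l) = 0 ∧
    deriv (phi k l) 0 = 0 ∧ deriv (phi k l) (LL k l) = 0 := by
  have hlR : ((l:ℝ)) ≠ 0 := Nat.cast_ne_zero.mpr hl.ne'
  have hlC : ((l:ℂ)) ≠ 0 := Nat.cast_ne_zero.mpr hl.ne'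
  have hn : (0:ℝ) < nR k l := by
    have h : 0 < k ^ 2 + k * l + l ^ 2 := by positivity
    unfold nR; exact_mod_cast h
  have hsn : Real.sqrt (nR k l) ^ 2 = nR k l := Real.sq_sqrt hn.le
  have hs3 : Real.sqrt 3 ^ 2 = 3 := Real.sq_sqrt (by norm_num)
  have hsn0 : Real.sqrt (nR k l) ≠ 0 := ne_of_gt (Real.sqrt_pos.mpr hn)
  have hs30 : Real.sqrt 3 ≠ 0 := ne_of_gt (Real.sqrt_pos.mpr (by norm_num))
  have hrpow : nR k l ^ ((3:ℝ)/2) = Real.sqrt (nR k l) ^ 3 := by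
    rw [show ((3:ℝ)/2) = (1/2) * (3:ℕ) by norm_num,
      Real.rpow_mul hn.le, Real.rpow_natCast, ← Real.rpow_natCast (nR k l ^ ((1:ℝ)/2)),
      ← Real.sqrt_eq_rpow]
    exact Real.rpow_natCast _ 3
  have hnval : Real.sqrt (nR k l) ^ 2 = (k:ℝ)^2 + k*l + l^2 := by
    rw [hsn]; unfold nR; push_cast; ring
  -- the three real roots satisfy t^3 - t = lam
  have hlamval : lam k l = ((2*(k:ℝ)+l) * ((k:ℝ)-l) * (2*(l:ℝ)+k)) /
      (3*Real.sqrt 3*Real.sqrt (nR k l)^3) := by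
    unfold lam; rw [hrpow]; push_cast; ring
  have hD : (3:ℝ)*Real.sqrt 3*Real.sqrt (nR k l)^3 ≠ 0 :=
    mul_ne_zero (mul_ne_zero three_ne_zero hs30) (pow_ne_zero 3 hsn0)
  have hvA : lam k l * (3*Real.sqrt 3*Real.sqrt (nR k l)^3)
      = (2*(k:ℝ)+l)*((2*(k:ℝ)+l)^2 - 3*Real.sqrt (nR k l)^2) := by
    rw [hlamval, div_mul_cancel₀ _ hD]
    linear_combination (3*(2*(k:ℝ)+l)) * hnval
  have hvB : lam k l * (3*Real.sqrt 3*Real.sqrt (nR k l)^3)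
      = (-((k:ℝ)+2*l))*((-((k:ℝ)+2*l))^2 - 3*Real.sqrt (nR k l)^2) := by
    rw [hlamval, div_mul_cancel₀ _ hD]
    linear_combination (-3*((k:ℝ)+2*l)) * hnval
  have hvC : lam k l * (3*Real.sqrt 3*Real.sqrt (nR k l)^3)
      = ((l:ℝ)-k)*(((l:ℝ)-k)^2 - 3*Real.sqrt (nR k l)^2) := by
    rw [hlamval, div_mul_cancel₀ _ hD]
    linear_combination (3*((l:ℝ)-k)) * hnval
  have hrA : tA' k l ^ 3 - tA' k l = lam k l :=
    cube_root_lemma' _ _ _ _ _ hsn0 hs30 hs3 rfl hvA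
  have hrB : tB' k l ^ 3 - tB' k l = lam k l :=
    cube_root_lemma' _ _ _ (lam k l) (-((k:ℝ)+2*l)) hsn0 hs30 hs3 (by unfold tB'; ring) hvB
  have hrC : tC' k l ^ 3 - tC' k l = lam k l :=
    cube_root_lemma' _ _ _ _ _ hsn0 hs30 hs3 rfl hvC
  have hA3 := root_complex' _ _ hrA
  have hB3 := root_complex' _ _ hrB
  have hC3 := root_complex' _ _ hrC
  -- linear relation among the roots
  have hlin : (l:ℝ) * tA' k l + k * tB' k l = ((k:ℝ)+l) * tC' k l := by
    unfold tA' tB' tC'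
    field_simp
    ring
  have hlinC : ((l:ℂ)) * ((tA' k l : ℝ):ℂ) + (k:ℂ) * ((tB' k l : ℝ):ℂ)
      = ((k:ℂ)+(l:ℂ)) * ((tC' k l : ℝ):ℂ) := by exact_mod_cast congrArg Complex.ofReal hlin
  -- values at L
  have hsqdiv : Real.sqrt (nR k l / 3) = Real.sqrt (nR k l) / Real.sqrt 3 :=
    Real.sqrt_div hn.le 3
  have hAL : tA' k l * LL k l = tC' k l * LL k l + 2*Real.pi*k := by
    unfold tA' tC' LL
    rw [hsqdiv]
    field_simp
    ring
  have hBL : tB' k l * LL k l = tC' k l * LL k l - 2*Real.pi*l := by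
    unfold tB' tC' LL
    rw [hsqdiv]
    field_simp
    ring
  have eA : Complex.exp (Complex.I * ((tA' k l : ℝ):ℂ) * ((LL k l : ℝ):ℂ))
      = Complex.exp (Complex.I * ((tC' k l : ℝ):ℂ) * ((LL k l : ℝ):ℂ)) := by
    have h : Complex.I * ((tA' k l : ℝ):ℂ) * ((LL k l : ℝ):ℂ)
        = Complex.I * ((tC' k l : ℝ):ℂ) * ((LL k l : ℝ):ℂ) + ((k:ℤ):ℂ) * (2*(Real.pi:ℂ)*Complex.I) := by
      have h2 := congrArg (fun r : ℝ => (r:ℂ)) hAL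
      push_cast at h2 ⊢
      linear_combination Complex.I * h2
    rw [h, Complex.exp_add, Complex.exp_int_mul_two_pi_mul_I, mul_one]
  have eB : Complex.exp (Complex.I * ((tB' k l : ℝ):ℂ) * ((LL k l : ℝ):ℂ))
      = Complex.exp (Complex.I * ((tC' k l : ℝ):ℂ) * ((LL k l : ℝ):ℂ)) := by
    have h : Complex.I * ((tB' k l : ℝ):ℂ) * ((LL k l : ℝ):ℂ)
        = Complex.I * ((tC' k l : ℝ):ℂ) * ((LL k l : ℝ):ℂ) + ((-(l:ℤ)):ℂ) * (2*(Real.pi:ℂ)*Complex.I) := by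
      have h2 := congrArg (fun r : ℝ => (r:ℂ)) hBL
      push_cast at h2 ⊢
      linear_combination Complex.I * h2
    rw [h, Complex.exp_add]
    rw [show ((-(l:ℤ)):ℂ) * (2*(Real.pi:ℂ)*Complex.I) = ((-(l:ℤ)):ℤ) * (2*(Real.pi:ℂ)*Complex.I) by push_cast; ring,
      Complex.exp_int_mul_two_pi_mul_I, mul_one]
  refine ⟨?_, ?_, ?_, ?_, ?_⟩
  · intro x
    rw [phi_eq' k l, deriv_comb', deriv_comb', deriv_comb']
    simp only [comb']
    linear_combination (-1 : ℂ) * Complex.exp (Complex.I * ((tA' k l : ℝ):ℂ) * (x:ℂ)) * hA3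
      + (-((k:ℂ)/l)) * Complex.exp (Complex.I * ((tB' k l : ℝ):ℂ) * (x:ℂ)) * hB3
      + (((k:ℂ)+l)/l) * Complex.exp (Complex.I * ((tC' k l : ℝ):ℂ) * (x:ℂ)) * hC3
  · rw [phi_eq' k l]
    simp only [comb', Complex.ofReal_zero, mul_zero, Complex.exp_zero, mul_one]
    field_simp
    ring
  · rw [phi_eq' k l]
    simp only [comb']
    rw [eA, eB]
    field_simp
    ring
  · rw [phi_eq' k l, deriv_comb']
    simp only [comb', Complex.ofReal_zero, mul_zero, Complex.exp_zero, mul_one]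
    field_simp
    linear_combination (-Complex.I) * hlinC
  · rw [phi_eq' k l, deriv_comb']
    simp only [comb']
    rw [eA, eB]
    field_simp
    linear_combination (-Complex.I) * Complex.exp (Complex.I * ((tC' k l : ℝ):ℂ) * ((LL k l : ℝ):ℂ)) * hlinC
end

section
/- Let k and l be positive integers. Then the function φ̃ satisfies φ̃'''(x) + φ̃'(x) + i·λ·φ̃(x) = 0 for every x ∈ ℝ and φ̃(0) = φ̃(L) = 0. Moreover, if 2k + l is divisible by 3, then φ̃'(0) = φ̃'(L) = i·√3·(k+l)/√n, which is nonzero. -/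
private lemma expDeriv (c : ℂ) (x : ℝ) :
    HasDerivAt (fun t : ℝ => Complex.exp (c * t)) (c * Complex.exp (c * x)) x := by
  have h : HasDerivAt (fun t : ℝ => (c * (t : ℂ))) c x := by
    simpa using (Complex.ofRealCLM.hasDerivAt (x := x)).const_mul c
  simpa [mul_comm] using h.cexp

private lemma derivComb (p q cA cB : ℂ) :
    deriv (fun x : ℝ => p * Complex.exp (cA * x) + q * Complex.exp (cB * x)) =
      fun x : ℝ => (p * cA) * Complex.exp (cA * x) + (q * cB) * Complex.exp (cB * x) := by
  funext x
  have h := ((expDeriv cA x).const_mul p).add ((expDeriv cB x).const_mul q)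
  rw [show deriv (fun x : ℝ => p * Complex.exp (cA * x) + q * Complex.exp (cB * x)) x = _ from h.deriv]; ring

theorem stmt_5 (k l : ℕ) (hk : 0 < k) (hl : 0 < l) :
    (∀ x : ℝ, deriv (deriv (deriv (phiT k l))) x + deriv (phiT k l) x
        + Complex.I * ((lam k l : ℝ) : ℂ) * phiT k l x = 0) ∧
    phiT k l 0 = 0 ∧ phiT k l (LL k l) = 0 ∧
    (3 ∣ 2 * k + l →
      deriv (phiT k l) 0 =
        Complex.I * ((Real.sqrt 3 * ((k : ℝ) + (l : ℝ)) / Real.sqrt (nR k l) : ℝ) : ℂ) ∧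
      deriv (phiT k l) (LL k l) =
        Complex.I * ((Real.sqrt 3 * ((k : ℝ) + (l : ℝ)) / Real.sqrt (nR k l) : ℝ) : ℂ) ∧
      Complex.I * ((Real.sqrt 3 * ((k : ℝ) + (l : ℝ)) / Real.sqrt (nR k l) : ℝ) : ℂ) ≠ 0) := by
  have hn0 : (0:ℝ) < nR k l := by
    have h : 0 < k ^ 2 + k * l + l ^ 2 := by positivity
    unfold nR; exact_mod_cast h
  set s := Real.sqrt (nR k l) with hsdef
  have hs0 : 0 < s := Real.sqrt_pos.mpr hn0
  have hs2 : s ^ 2 = nR k l := Real.sq_sqrt hn0.le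
  set t := Real.sqrt 3 with htdef
  have ht0 : (0:ℝ) < t := by rw [htdef]; positivity
  have ht2 : t ^ 2 = 3 := Real.sq_sqrt (by norm_num)
  set aa : ℝ := t * (2 * (k:ℝ) + l) / (3 * s) with haadef
  set bb : ℝ := t * ((k:ℝ) + 2 * l) / (3 * s) with hbbdef
  set cA : ℂ := (aa : ℂ) * Complex.I with hcA
  set cB : ℂ := -((bb : ℂ) * Complex.I) with hcB
  have phiT_eq : phiT k l = fun x : ℝ =>
      (1:ℂ) * Complex.exp (cA * x) + (-1) * Complex.exp (cB * x) := by
    funext x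
    rw [hcA, hcB, haadef, hbbdef]
    simp only [phiT]
    rw [← htdef, ← hsdef]
    push_cast
    ring_nf
  have hnval : nR k l = (k:ℝ)^2 + k*l + l^2 := by unfold nR; push_cast; ring
  have hpow : nR k l ^ ((3:ℝ)/2) = s ^ 3 := by
    rw [hsdef, Real.sqrt_eq_rpow, ← Real.rpow_natCast (nR k l ^ ((1:ℝ)/2)) 3,
      ← Real.rpow_mul hn0.le]
    norm_num
  have hs3 : s ^ 3 = nR k l * s := by rw [pow_succ, hs2]
  have hA : aa ^ 3 - aa = lam k l := by
    unfold lam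
    rw [hpow, haadef, hs3]
    push_cast
    field_simp
    ring_nf
    have ht4 : t ^ 4 = 9 := by
      have h4 : t ^ 4 = (t ^ 2) ^ 2 := by ring
      rw [h4, ht2]; norm_num
    have hs4 : s ^ 4 = nR k l ^ 2 := by
      have h4 : s ^ 4 = (s ^ 2) ^ 2 := by ring
      rw [h4, hs2]
    rw [← htdef]; ring_nf
    simp only [ht4, ht2, hs4, hs2, hnval]; ring
  have hB : bb - bb ^ 3 = lam k l := by
    unfold lam
    rw [hpow, hbbdef, hs3]
    push_cast
    field_simp
    ring_nf
    have ht4 : t ^ 4 = 9 := by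
      have h4 : t ^ 4 = (t ^ 2) ^ 2 := by ring
      rw [h4, ht2]; norm_num
    have hs4 : s ^ 4 = nR k l ^ 2 := by
      have h4 : s ^ 4 = (s ^ 2) ^ 2 := by ring
      rw [h4, hs2]
    rw [← htdef]; ring_nf
    simp only [ht4, ht2, hs4, hs2, hnval]; ring
  have hAC : (aa : ℂ) ^ 3 - (aa : ℂ) = ((lam k l : ℝ) : ℂ) := by exact_mod_cast hA
  have hBC : (bb : ℂ) - (bb : ℂ) ^ 3 = ((lam k l : ℝ) : ℂ) := by exact_mod_cast hB
  have e1 : cA ^ 3 + cA + Complex.I * ((lam k l : ℝ) : ℂ) = 0 := by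
    rw [hcA]
    linear_combination (-Complex.I) * hAC + (aa:ℂ)^3 * Complex.I * Complex.I_sq
  have e2 : cB ^ 3 + cB + Complex.I * ((lam k l : ℝ) : ℂ) = 0 := by
    rw [hcB]
    linear_combination (-Complex.I) * hBC + (-(bb:ℂ)^3 * Complex.I) * Complex.I_sq
  have d1 : deriv (phiT k l) = fun x : ℝ =>
      (1 * cA) * Complex.exp (cA * x) + ((-1) * cB) * Complex.exp (cB * x) := by
    rw [phiT_eq]; exact derivComb 1 (-1) cA cB
  have d2 : deriv (deriv (phiT k l)) = fun x : ℝ =>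
      (1 * cA * cA) * Complex.exp (cA * x) + ((-1) * cB * cB) * Complex.exp (cB * x) := by
    rw [d1]; exact derivComb (1 * cA) ((-1) * cB) cA cB
  have d3 : deriv (deriv (deriv (phiT k l))) = fun x : ℝ =>
      (1 * cA * cA * cA) * Complex.exp (cA * x)
        + ((-1) * cB * cB * cB) * Complex.exp (cB * x) := by
    rw [d2]; exact derivComb (1 * cA * cA) ((-1) * cB * cB) cA cB
  have hsqdiv : Real.sqrt (nR k l / 3) = s / t := by
    rw [hsdef, htdef]; exact Real.sqrt_div hn0.le 3
  have hsum : aa + bb = t * ((k:ℝ) + l) / s := by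
    rw [haadef, hbbdef]; field_simp; ring
  have hsumC : (aa : ℂ) + (bb : ℂ) = ((t * ((k:ℝ) + l) / s : ℝ) : ℂ) := by
    rw [← Complex.ofReal_add, hsum]
  refine ⟨?_, ?_, ?_, ?_⟩
  · intro x
    simp only [d3]
    simp only [d1]
    simp only [phiT_eq]
    linear_combination Complex.exp (cA * (x:ℂ)) * e1 - Complex.exp (cB * (x:ℂ)) * e2
  · simp only [phiT_eq, Complex.ofReal_zero, mul_zero, Complex.exp_zero, mul_one]
    ring
  · have hprod : (aa + bb) * LL k l = 2 * Real.pi * ((k:ℝ) + l) := by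
      rw [haadef, hbbdef, LL, hsqdiv]; field_simp; ring
    have hprodC : ((aa:ℂ) + (bb:ℂ)) * ((LL k l : ℝ) : ℂ)
        = 2 * (Real.pi : ℂ) * ((k:ℕ) + (l:ℕ) : ℂ) := by
      have h := congrArg (Complex.ofReal) hprod
      push_cast at h ⊢
      exact h
    have hexpL : Complex.exp (cA * ((LL k l : ℝ) : ℂ))
        = Complex.exp (cB * ((LL k l : ℝ) : ℂ)) := by
      have hone : Complex.exp ((((k + l : ℕ) : ℤ) : ℂ) * (2 * Real.pi * Complex.I)) = 1 :=
        Complex.exp_int_mul_two_pi_mul_I _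
      have harg : cA * ((LL k l : ℝ) : ℂ)
          = cB * ((LL k l : ℝ) : ℂ) + (((k + l : ℕ) : ℤ) : ℂ) * (2 * Real.pi * Complex.I) := by
        rw [hcA, hcB]; push_cast
        linear_combination Complex.I * hprodC
      rw [harg, Complex.exp_add, hone, mul_one]
    simp only [phiT_eq]
    rw [hexpL]; ring
  · intro hdvd
    obtain ⟨m, hm⟩ := hdvd
    have hmR : 2 * (k:ℝ) + l = 3 * m := by exact_mod_cast hm
    have haaL : aa * LL k l = 2 * Real.pi * (2 * (k:ℝ) + l) / 3 := by
      rw [haadef, LL, hsqdiv]; field_simp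
    have hbbL : bb * LL k l = 2 * Real.pi * ((k:ℝ) + 2 * l) / 3 := by
      rw [hbbdef, LL, hsqdiv]; field_simp
    have e1L : Complex.exp (cA * ((LL k l : ℝ) : ℂ)) = 1 := by
      have h1 : aa * LL k l = 2 * Real.pi * m := by rw [haaL, hmR]; ring
      have h1C := congrArg (Complex.ofReal) h1
      push_cast at h1C
      have harg : cA * ((LL k l : ℝ) : ℂ) = ((m : ℤ) : ℂ) * (2 * Real.pi * Complex.I) := by
        rw [hcA]; push_cast
        linear_combination Complex.I * h1C
      rw [harg]; exact Complex.exp_int_mul_two_pi_mul_I m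
    have e2L : Complex.exp (cB * ((LL k l : ℝ) : ℂ)) = 1 := by
      have h2 : bb * LL k l = 2 * Real.pi * ((k:ℝ) + l - m) := by
        rw [hbbL]; linear_combination (-(2 * Real.pi / 3)) * hmR
      have h2C := congrArg (Complex.ofReal) h2
      push_cast at h2C
      have harg : cB * ((LL k l : ℝ) : ℂ)
          = (((m : ℤ) - k - l : ℤ) : ℂ) * (2 * Real.pi * Complex.I) := by
        rw [hcB]; push_cast
        linear_combination (-Complex.I) * h2C
      rw [harg]; exact Complex.exp_int_mul_two_pi_mul_I _
    have hkl : (0:ℝ) < (k:ℝ) + l :=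
      add_pos (by exact_mod_cast hk) (by exact_mod_cast hl)
    refine ⟨?_, ?_, ?_⟩
    · simp only [d1, Complex.ofReal_zero, mul_zero, Complex.exp_zero, mul_one]
      rw [hcA, hcB]
      linear_combination Complex.I * hsumC
    · simp only [d1]
      rw [e1L, e2L, hcA, hcB]
      linear_combination Complex.I * hsumC
    · have hc0 : (0:ℝ) < t * ((k:ℝ) + l) / s := div_pos (mul_pos ht0 hkl) hs0
      exact mul_ne_zero Complex.I_ne_zero (Complex.ofReal_ne_zero.mpr hc0.ne')
end

section
/- Let k and l be positive integers with k ≡ l (mod 3). Then: (a) the functions φ and φ̃ are linearly independent, i.e. if c₁·φ(x) + c₂·φ̃(x) = 0 for all x ∈ [0,L] then c₁ = c₂ = 0; and (b) if ψ : ℝ → ℂ is three times continuously differentiable and satisfies ψ'''(x) + ψ'(x) + i·λ·ψ(x) = 0 for every x ∈ [0,L], together with ψ(0) = ψ(L) = 0 and ψ'(0) = ψ'(L), then there exist c₁, c₂ ∈ ℂ such that ψ(x) = c₁·φ(x) + c₂·φ̃(x) for all x ∈ [0,L]. -/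
/- ### Auxiliary lemmas -/

section Aux
open Complex Set

lemma cexp_hasDerivAt' (μ : ℂ) (x : ℝ) :
    HasDerivAt (fun y : ℝ => Complex.exp (μ * y)) (μ * Complex.exp (μ * x)) x := by
  have h1 : HasDerivAt (fun z : ℂ => Complex.exp (μ * z)) (μ * Complex.exp (μ * x)) (x : ℂ) := by
    simpa [mul_comm] using ((hasDerivAt_id (x:ℂ)).const_mul μ).cexp
  exact h1.comp_ofReal

lemma cexp_contDiff' (μ : ℂ) : ContDiff ℝ ⊤ (fun y : ℝ => Complex.exp (μ * y)) := by
  have h : ContDiff ℂ ⊤ (fun z : ℂ => Complex.exp (μ * z)) :=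
    Complex.contDiff_exp.comp (contDiff_const.mul contDiff_id)
  exact (h.restrict_scalars ℝ).comp Complex.ofRealCLM.contDiff

noncomputable def combo (A B C P Q R : ℂ) : ℝ → ℂ := fun x =>
  A * Complex.exp (P * x) + B * Complex.exp (Q * x) + C * Complex.exp (R * x)

lemma combo_hasDerivAt (A B C P Q R : ℂ) (x : ℝ) :
    HasDerivAt (combo A B C P Q R) (combo (A*P) (B*Q) (C*R) P Q R x) x := by
  unfold combo
  have := (((cexp_hasDerivAt' P x).const_mul A).add ((cexp_hasDerivAt' Q x).const_mul B)).add
    ((cexp_hasDerivAt' R x).const_mul C)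
  convert this using 1
  · rfl
  · rfl
  · ring

lemma combo_contDiff (A B C P Q R : ℂ) (n : WithTop ℕ∞) : ContDiff ℝ n (combo A B C P Q R) := by
  unfold combo
  exact (((contDiff_const.mul ((cexp_contDiff' P).of_le le_top)).add
    (contDiff_const.mul ((cexp_contDiff' Q).of_le le_top))).add
    (contDiff_const.mul ((cexp_contDiff' R).of_le le_top)))

lemma combo_deriv (A B C P Q R : ℂ) :
    deriv (combo A B C P Q R) = combo (A*P) (B*Q) (C*R) P Q R := by
  funext x
  exact (combo_hasDerivAt A B C P Q R x).deriv

lemma combo_zero (A B C P Q R : ℂ) : combo A B C P Q R 0 = A + B + C := by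
  simp [combo]

lemma ode1 (μ : ℂ) (L : ℝ) (f : ℝ → ℂ) (hf : Differentiable ℝ f)
    (hode : ∀ x ∈ Set.Icc (0:ℝ) L, deriv f x = μ * f x) (h0 : f 0 = 0) :
    ∀ x ∈ Set.Icc (0:ℝ) L, f x = 0 := by
  intro x hx
  set g : ℝ → ℂ := fun y => f y * Complex.exp (-μ * y) with hg
  have hgd : ∀ y : ℝ, HasDerivAt g (deriv f y * Complex.exp (-μ * y) +
      f y * (-μ * Complex.exp (-μ * y))) y := by
    intro y
    exact ((hf y).hasDerivAt).mul (cexp_hasDerivAt' (-μ) y)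
  have key : ∀ y ∈ Set.Icc (0:ℝ) L, g y = g 0 := by
    apply constant_of_has_deriv_right_zero
    · exact fun y _ => (hgd y).continuousAt.continuousWithinAt
    · intro y hy
      have hy' : y ∈ Set.Icc (0:ℝ) L := ⟨hy.1, hy.2.le⟩
      have : deriv f y * Complex.exp (-μ * y) + f y * (-μ * Complex.exp (-μ * y)) = 0 := by
        rw [hode y hy']; ring
      exact (this ▸ (hgd y)).hasDerivWithinAt
  have hx0 : g x = 0 := by
    rw [key x hx, hg]; simp [h0]
  have : f x * Complex.exp (-μ * x) = 0 := hx0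
  rcases mul_eq_zero.mp this with h | h
  · exact h
  · exact absurd h (Complex.exp_ne_zero _)

lemma ode3 (P Q R : ℂ) (L : ℝ) (g : ℝ → ℂ) (hg : ContDiff ℝ 3 g)
    (hode : ∀ x ∈ Set.Icc (0:ℝ) L, deriv (deriv (deriv g)) x =
      (P+Q+R) * deriv (deriv g) x - (P*Q+Q*R+R*P) * deriv g x + (P*Q*R) * g x)
    (h0 : g 0 = 0) (h1 : deriv g 0 = 0) (h2 : deriv (deriv g) 0 = 0) :
    ∀ x ∈ Set.Icc (0:ℝ) L, g x = 0 := by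
  have h3' : ContDiff ℝ ((2:ℕ∞)+1) g := by norm_num at hg ⊢; exact hg
  rw [contDiff_succ_iff_deriv] at h3'
  have h2' : ContDiff ℝ ((1:ℕ∞)+1) (deriv g) := by
    have := h3'.2; norm_num at this ⊢; exact this
  rw [contDiff_succ_iff_deriv] at h2'
  have h1' : ContDiff ℝ ((0:ℕ∞)+1) (deriv (deriv g)) := by
    have := h2'.2; norm_num at this ⊢; exact this
  rw [contDiff_succ_iff_deriv] at h1'
  have dg : Differentiable ℝ g := h3'.1
  have ddg : Differentiable ℝ (deriv g) := h2'.1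
  have dddg : Differentiable ℝ (deriv (deriv g)) := h1'.1
  set w : ℝ → ℂ := fun x => deriv (deriv g) x - (Q+R) * deriv g x + Q*R * g x with hw
  have dw : Differentiable ℝ w := (dddg.sub ((ddg.const_mul _))).add (dg.const_mul _)
  have derivw : ∀ x, deriv w x =
      deriv (deriv (deriv g)) x - (Q+R) * deriv (deriv g) x + Q*R * deriv g x := by
    intro x
    rw [hw]
    rw [deriv_fun_add (f := fun y => deriv (deriv g) y - (Q+R) * deriv g y) ((dddg x).sub ((ddg x).const_mul _)) ((dg x).const_mul _),
      deriv_fun_sub (dddg x) ((ddg x).const_mul _), deriv_const_mul _ (ddg x),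
      deriv_const_mul _ (dg x)]
  have hw0 : ∀ x ∈ Set.Icc (0:ℝ) L, w x = 0 := by
    apply ode1 P L w dw
    · intro x hx
      rw [derivw x, hode x hx, hw]
      ring
    · rw [hw]; simp [h0, h1, h2]
  set v : ℝ → ℂ := fun x => deriv g x - R * g x with hv
  have dv : Differentiable ℝ v := ddg.sub (dg.const_mul _)
  have hv0 : ∀ x ∈ Set.Icc (0:ℝ) L, v x = 0 := by
    apply ode1 Q L v dv
    · intro x hx
      have hwx : deriv (deriv g) x - (Q+R) * deriv g x + Q*R * g x = 0 := hw0 x hx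
      rw [hv]
      rw [deriv_fun_sub (ddg x) ((dg x).const_mul _), deriv_const_mul _ (dg x)]
      have : deriv (deriv g) x = (Q+R) * deriv g x - Q*R * g x := by
        linear_combination hwx
      rw [this]; ring
    · rw [hv]; simp [h0, h1]
  apply ode1 R L g dg
  · intro x hx
    have := hv0 x hx
    simp only [hv] at this
    linear_combination this
  · exact h0

end Aux

open Complex Set

theorem stmt_7 (k l : ℕ) (hk : 0 < k) (hl : 0 < l) (hmod : k ≡ l [MOD 3]) :
    (∀ c₁ c₂ : ℂ,
      (∀ x ∈ Set.Icc (0 : ℝ) (LL k l), c₁ * phi k l x + c₂ * phiT k l x = 0) →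
      c₁ = 0 ∧ c₂ = 0) ∧
    (∀ ψ : ℝ → ℂ, ContDiff ℝ 3 ψ →
      (∀ x ∈ Set.Icc (0 : ℝ) (LL k l),
        deriv (deriv (deriv ψ)) x + deriv ψ x + Complex.I * ((lam k l : ℝ) : ℂ) * ψ x = 0) →
      ψ 0 = 0 → ψ (LL k l) = 0 → deriv ψ 0 = deriv ψ (LL k l) →
      ∃ c₁ c₂ : ℂ, ∀ x ∈ Set.Icc (0 : ℝ) (LL k l),
        ψ x = c₁ * phi k l x + c₂ * phiT k l x) := by
  -- ## real scalars
  set s3 : ℝ := Real.sqrt 3 with hs3def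
  have hn0 : (0:ℝ) < nR k l := by unfold nR; positivity
  set sn : ℝ := Real.sqrt (nR k l) with hsndef
  have hsn : 0 < sn := Real.sqrt_pos.mpr hn0
  have hs3 : s3 ^ 2 = 3 := Real.sq_sqrt (by norm_num)
  have hs3pos : 0 < s3 := Real.sqrt_pos.mpr (by norm_num)
  have hsn2 : sn ^ 2 = (k:ℝ)^2 + k*l + l^2 := by
    rw [hsndef, Real.sq_sqrt hn0.le]; unfold nR; push_cast; ring
  set a : ℝ := s3 * (2*k+l) / (3*sn) with ha
  set b : ℝ := -(s3 * (k+2*l) / (3*sn)) with hb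
  set c : ℝ := s3 * ((l:ℝ)-k) / (3*sn) with hc
  have hsum : a + b + c = 0 := by
    rw [ha, hb, hc]; field_simp; ring
  have hab : a*b + b*c + c*a = -1 := by
    rw [ha, hb, hc]; field_simp
    linear_combination (-3*((k:ℝ)^2+k*l+l^2)) * hs3 + 9 * hsn2
  have hrpow : nR k l ^ ((3:ℝ)/2) = sn ^ 3 := by
    rw [hsndef, show Real.sqrt (nR k l) = nR k l ^ ((1:ℝ)/2) from Real.sqrt_eq_rpow _,
      ← Real.rpow_natCast (nR k l ^ ((1:ℝ)/2)) 3, ← Real.rpow_mul hn0.le]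
    norm_num
  have habc : a * b * c = lam k l := by
    rw [ha, hb, hc]
    unfold lam
    rw [hrpow]
    push_cast
    field_simp
    linear_combination (((k:ℝ)+2*l)*((k:ℝ)-l)*(s3^2+3)) * hs3 - (((k:ℝ)+2*l)*((k:ℝ)-l)*s3^3) * hs3def
  have h10r : (l:ℝ)*a + k*b - ((k:ℝ)+l)*c = 0 := by
    rw [ha, hb, hc]; field_simp; ring
  have hWr : (l:ℝ)*a^2 + k*b^2 - ((k:ℝ)+l)*c^2 = 3*k*l*((k:ℝ)+l) / ((k:ℝ)^2+k*l+l^2) := by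
    rw [ha, hb, hc]
    have hnn : (k:ℝ)^2+k*l+l^2 ≠ 0 := by positivity
    field_simp
    linear_combination (9*(l:ℝ)*k*((k:ℝ)+l)*((k:ℝ)^2+k*l+l^2)) * hs3
      - (27*(l:ℝ)*k*((k:ℝ)+l)) * hsn2
  have hWpos : (0:ℝ) < (l:ℝ)*a^2 + k*b^2 - ((k:ℝ)+l)*c^2 := by
    rw [hWr]; positivity
  have hapb : a - b ≠ 0 := by
    have : a - b = s3 * (3*k+3*l) / (3*sn) := by rw [ha, hb]; field_simp; ring
    rw [this]
    positivity
  -- ## complex roots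
  set P : ℂ := Complex.I * (a : ℂ) with hP
  set Q : ℂ := Complex.I * (b : ℂ) with hQ
  set R : ℂ := Complex.I * (c : ℂ) with hR
  have hl0 : (l:ℂ) ≠ 0 := by exact_mod_cast Nat.cast_ne_zero.mpr hl.ne'
  have hsumC : ((a:ℂ) + (b:ℂ) + (c:ℂ)) = 0 := by exact_mod_cast congrArg (Complex.ofReal) hsum
  have habC : ((a:ℂ)*(b:ℂ) + (b:ℂ)*(c:ℂ) + (c:ℂ)*(a:ℂ)) = -1 := by
    exact_mod_cast congrArg (Complex.ofReal) hab
  have habcC : ((a:ℂ)*(b:ℂ)*(c:ℂ)) = ((lam k l : ℝ) : ℂ) := by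
    exact_mod_cast congrArg (Complex.ofReal) habc
  have h10C : ((l:ℂ))*(a:ℂ) + (k:ℂ)*(b:ℂ) - ((k:ℂ)+(l:ℂ))*(c:ℂ) = 0 := by
    exact_mod_cast congrArg (Complex.ofReal) h10r
  have hσ1 : P + Q + R = 0 := by
    rw [hP, hQ, hR]; linear_combination Complex.I * hsumC
  have hσ2 : P*Q + Q*R + R*P = 1 := by
    rw [hP, hQ, hR]
    linear_combination (Complex.I^2) * habC - Complex.I_sq
  have hσ3 : P*Q*R = -(Complex.I * ((lam k l : ℝ) : ℂ)) := by
    rw [hP, hQ, hR]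
    linear_combination (Complex.I^3) * habcC + (Complex.I * ((lam k l : ℝ):ℂ)) * Complex.I_sq
  -- first-derivative-at-0 identity for φ
  have hd1phi : ((l:ℂ)) * ((-1)*P + (-((k:ℂ)/l))*Q + (((k:ℂ)+l)/l)*R) = 0 := by
    rw [hP, hQ, hR]
    field_simp
    linear_combination (-Complex.I) * h10C
  -- second-derivative-at-0 value for φ
  set Wc : ℂ := (-1)*P^2 + (-((k:ℂ)/l))*Q^2 + (((k:ℂ)+l)/l)*R^2 with hWc
  have hWcl : (l:ℂ) * Wc = (((l:ℝ)*a^2 + k*b^2 - ((k:ℝ)+l)*c^2 : ℝ) : ℂ) := by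
    rw [hWc, hP, hQ, hR]
    push_cast
    field_simp
    linear_combination (-((l:ℂ)*(a:ℂ)^2 + (k:ℂ)*(b:ℂ)^2 - ((k:ℂ)+(l:ℂ))*(c:ℂ)^2)) * Complex.I_sq
  have hWc0 : Wc ≠ 0 := by
    intro h
    rw [h, mul_zero] at hWcl
    have : ((l:ℝ)*a^2 + k*b^2 - ((k:ℝ)+l)*c^2 : ℝ) = 0 := by exact_mod_cast hWcl.symm
    exact hWpos.ne' this
  have hPQ : P - Q ≠ 0 := by
    rw [hP, hQ]
    intro h
    have : Complex.I * (((a - b : ℝ)):ℂ) = 0 := by push_cast; linear_combination h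
    rcases mul_eq_zero.mp this with h' | h'
    · exact Complex.I_ne_zero h'
    · exact hapb (by exact_mod_cast h')
  -- φ and φ̃ as exponential combinations
  have hphi : phi k l = combo (-1) (-((k:ℂ)/l)) (((k:ℂ)+l)/l) P Q R := by
    funext x
    unfold phi combo
    have e1 : Complex.I * ((x * (Real.sqrt 3 * ((2 * k + l : ℕ) : ℝ)) /
        (3 * Real.sqrt (nR k l)) : ℝ) : ℂ) = P * x := by
      rw [hP]
      have : (x * (Real.sqrt 3 * ((2 * k + l : ℕ) : ℝ)) / (3 * Real.sqrt (nR k l)) : ℝ)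
          = a * x := by rw [ha, ← hs3def, ← hsndef]; push_cast; ring
      rw [this]; push_cast; ring
    have e2 : -(Complex.I * ((x * (Real.sqrt 3 * ((k + 2 * l : ℕ) : ℝ)) /
        (3 * Real.sqrt (nR k l)) : ℝ) : ℂ)) = Q * x := by
      rw [hQ]
      have : (x * (Real.sqrt 3 * ((k + 2 * l : ℕ) : ℝ)) / (3 * Real.sqrt (nR k l)) : ℝ)
          = -(b * x) := by rw [hb, ← hs3def, ← hsndef]; push_cast; ring
      rw [this]; push_cast; ring
    have e3 : Complex.I * ((x * (Real.sqrt 3 * ((l : ℝ) - (k : ℝ))) /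
        (3 * Real.sqrt (nR k l)) : ℝ) : ℂ) = R * x := by
      rw [hR]
      have : (x * (Real.sqrt 3 * ((l : ℝ) - (k : ℝ))) / (3 * Real.sqrt (nR k l)) : ℝ)
          = c * x := by rw [hc, ← hs3def, ← hsndef]; push_cast; ring
      rw [this]; push_cast; ring
    rw [e1, e2, e3]
    ring
  have hphiT : phiT k l = combo 1 (-1) 0 P Q R := by
    funext x
    unfold phiT combo
    have e1 : Complex.I * ((x * (Real.sqrt 3 * ((2 * k + l : ℕ) : ℝ)) /
        (3 * Real.sqrt (nR k l)) : ℝ) : ℂ) = P * x := by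
      rw [hP]
      have : (x * (Real.sqrt 3 * ((2 * k + l : ℕ) : ℝ)) / (3 * Real.sqrt (nR k l)) : ℝ)
          = a * x := by rw [ha, ← hs3def, ← hsndef]; push_cast; ring
      rw [this]; push_cast; ring
    have e2 : -(Complex.I * ((x * (Real.sqrt 3 * ((k + 2 * l : ℕ) : ℝ)) /
        (3 * Real.sqrt (nR k l)) : ℝ) : ℂ)) = Q * x := by
      rw [hQ]
      have : (x * (Real.sqrt 3 * ((k + 2 * l : ℕ) : ℝ)) / (3 * Real.sqrt (nR k l)) : ℝ)
          = -(b * x) := by rw [hb, ← hs3def, ← hsndef]; push_cast; ring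
      rw [this]; push_cast; ring
    rw [e1, e2]
    ring
  have hL0 : 0 < LL k l := by
    unfold LL
    have : 0 < Real.sqrt (nR k l / 3) := Real.sqrt_pos.mpr (by positivity)
    positivity
  constructor
  · -- ### part (a)
    intro c₁ c₂ hzero
    set A : ℂ := c₁*(-1) + c₂*1 with hA
    set B : ℂ := c₁*(-((k:ℂ)/l)) + c₂*(-1) with hB
    set C : ℂ := c₁*(((k:ℂ)+l)/l) with hC
    have hcomb : ∀ x : ℝ, c₁ * phi k l x + c₂ * phiT k l x = combo A B C P Q R x := by
      intro x
      rw [hphi, hphiT]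
      simp only [combo, hA, hB, hC]
      ring
    have hzero' : Set.EqOn (combo A B C P Q R) (fun _ => (0:ℂ)) (Set.Icc 0 (LL k l)) := by
      intro x hx
      have := hzero x hx
      rw [hcomb x] at this
      exact this
    -- first derivative vanishes on Icc
    have step : ∀ F : ℝ → ℂ, ContDiff ℝ ⊤ F →
        Set.EqOn F (fun _ => (0:ℂ)) (Set.Icc 0 (LL k l)) →
        Set.EqOn (deriv F) (fun _ => (0:ℂ)) (Set.Icc 0 (LL k l)) := by
      intro F hF hFz
      have h1 : Set.EqOn (deriv F) (fun _ => (0:ℂ)) (Set.Ioo 0 (LL k l)) := by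
        intro x hx
        have hev : F =ᶠ[nhds x] (fun _ => (0:ℂ)) :=
          Filter.eventually_of_mem (Icc_mem_nhds hx.1 hx.2) hFz
        have := hev.deriv_eq
        simpa using this
      have h2 := h1.closure (hF.continuous_deriv le_top) continuous_const
      rwa [closure_Ioo hL0.ne] at h2
    have hcont : ContDiff ℝ ⊤ (combo A B C P Q R) := combo_contDiff A B C P Q R ⊤
    have hd1 := step _ hcont hzero'
    rw [combo_deriv] at hd1
    have hd2 := step _ (combo_contDiff _ _ _ P Q R ⊤) hd1
    rw [combo_deriv] at hd2
    have hv1 : combo (A*P) (B*Q) (C*R) P Q R 0 = 0 := hd1 (Set.left_mem_Icc.mpr hL0.le)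
    have hv2 : combo (A*P*P) (B*Q*Q) (C*R*R) P Q R 0 = 0 :=
      hd2 (Set.left_mem_Icc.mpr hL0.le)
    rw [combo_zero] at hv1 hv2
    -- hv1 : A*P + B*Q + C*R = 0
    have e1 : A*P + B*Q + C*R
        = c₁*((-1)*P + (-((k:ℂ)/l))*Q + (((k:ℂ)+l)/l)*R) + c₂*(P - Q) := by
      rw [hA, hB, hC]; ring
    have hphid0 : (-1)*P + (-((k:ℂ)/l))*Q + (((k:ℂ)+l)/l)*R = 0 := by
      rcases mul_eq_zero.mp hd1phi with h | h
      · exact absurd h hl0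
      · exact h
    have hc2 : c₂ = 0 := by
      have : c₂ * (P - Q) = 0 := by
        rw [← hv1, e1, hphid0]; ring
      rcases mul_eq_zero.mp this with h | h
      · exact h
      · exact absurd h hPQ
    have e2 : A*P*P + B*Q*Q + C*R*R = c₁*Wc + c₂*(P^2 - Q^2) := by
      rw [hA, hB, hC, hWc]; ring
    have hc1 : c₁ = 0 := by
      have : c₁ * Wc = 0 := by
        rw [← hv2, e2, hc2]; ring
      rcases mul_eq_zero.mp this with h | h
      · exact h
      · exact absurd h hWc0
    exact ⟨hc1, hc2⟩
  · -- ### part (b)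
    intro ψ hψ hode hψ0 _ _
    -- differentiability bookkeeping
    have h3' : ContDiff ℝ ((2:ℕ∞)+1) ψ := by norm_num at hψ ⊢; exact hψ
    rw [contDiff_succ_iff_deriv] at h3'
    have h2' : ContDiff ℝ ((1:ℕ∞)+1) (deriv ψ) := by
      have := h3'.2; norm_num at this ⊢; exact this
    rw [contDiff_succ_iff_deriv] at h2'
    have h1' : ContDiff ℝ ((0:ℕ∞)+1) (deriv (deriv ψ)) := by
      have := h2'.2; norm_num at this ⊢; exact this
    rw [contDiff_succ_iff_deriv] at h1'
    have dψ : Differentiable ℝ ψ := h3'.1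
    have ddψ : Differentiable ℝ (deriv ψ) := h2'.1
    have dddψ : Differentiable ℝ (deriv (deriv ψ)) := h1'.1
    -- the coefficients
    set c₂ : ℂ := deriv ψ 0 / (P - Q) with hc2def
    set c₁ : ℂ := (deriv (deriv ψ) 0 - c₂ * (P^2 - Q^2)) / Wc with hc1def
    refine ⟨c₁, c₂, ?_⟩
    set A : ℂ := c₁*(-1) + c₂*1 with hA
    set B : ℂ := c₁*(-((k:ℂ)/l)) + c₂*(-1) with hB
    set C : ℂ := c₁*(((k:ℂ)+l)/l) with hC
    have hcomb : ∀ x : ℝ, c₁ * phi k l x + c₂ * phiT k l x = combo A B C P Q R x := by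
      intro x
      rw [hphi, hphiT]
      simp only [combo, hA, hB, hC]
      ring
    set h : ℝ → ℂ := combo A B C P Q R with hh
    have dh : Differentiable ℝ h := (combo_contDiff A B C P Q R ⊤).differentiable (by simp)
    have dh1 : Differentiable ℝ (deriv h) := by
      rw [hh, combo_deriv]
      exact (combo_contDiff _ _ _ P Q R ⊤).differentiable (by simp)
    have dh2 : Differentiable ℝ (deriv (deriv h)) := by
      rw [hh, combo_deriv, combo_deriv]
      exact (combo_contDiff _ _ _ P Q R ⊤).differentiable (by simp)
    set g : ℝ → ℂ := fun x => ψ x - h x with hg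
    have dgfun : ∀ x, deriv g x = deriv ψ x - deriv h x := by
      intro x
      rw [hg]
      exact deriv_fun_sub (dψ x) (dh x)
    have dg : Differentiable ℝ g := dψ.sub dh
    have dg1 : Differentiable ℝ (deriv g) := by
      have : deriv g = fun x => deriv ψ x - deriv h x := funext dgfun
      rw [this]
      exact ddψ.sub dh1
    have dgfun2 : ∀ x, deriv (deriv g) x = deriv (deriv ψ) x - deriv (deriv h) x := by
      intro x
      have : deriv g = fun x => deriv ψ x - deriv h x := funext dgfun
      rw [this]
      exact deriv_fun_sub (ddψ x) (dh1 x)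
    have dgfun3 : ∀ x, deriv (deriv (deriv g)) x
        = deriv (deriv (deriv ψ)) x - deriv (deriv (deriv h)) x := by
      intro x
      have h2 : deriv (deriv g) = fun x => deriv (deriv ψ) x - deriv (deriv h) x :=
        funext dgfun2
      rw [h2]
      exact deriv_fun_sub (dddψ x) (dh2 x)
    -- derivatives of h explicitly
    have hh1 : deriv h = combo (A*P) (B*Q) (C*R) P Q R := by rw [hh, combo_deriv]
    have hh2 : deriv (deriv h) = combo (A*P*P) (B*Q*Q) (C*R*R) P Q R := by
      rw [hh1, combo_deriv]
    have hh3 : deriv (deriv (deriv h)) = combo (A*P*P*P) (B*Q*Q*Q) (C*R*R*R) P Q R := by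
      rw [hh2, combo_deriv]
    -- h satisfies the ODE identically
    have hodeh : ∀ x : ℝ, deriv (deriv (deriv h)) x =
        (P+Q+R) * deriv (deriv h) x - (P*Q+Q*R+R*P) * deriv h x + (P*Q*R) * h x := by
      intro x
      rw [hh3, hh2, hh1, hh]
      simp only [combo]
      ring
    have hphid0 : (-1)*P + (-((k:ℂ)/l))*Q + (((k:ℂ)+l)/l)*R = 0 := by
      rcases mul_eq_zero.mp hd1phi with h | h
      · exact absurd h hl0
      · exact h
    -- initial values of g
    have hg0 : g 0 = 0 := by
      rw [hg]
      simp only [hh, combo_zero]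
      rw [hψ0]
      have : A + B + C = 0 := by
        rw [hA, hB, hC]
        field_simp
        ring
      rw [this]
      ring
    have hg1 : deriv g 0 = 0 := by
      rw [dgfun 0, hh1, combo_zero]
      have e1 : A*P + B*Q + C*R
          = c₁*((-1)*P + (-((k:ℂ)/l))*Q + (((k:ℂ)+l)/l)*R) + c₂*(P - Q) := by
        rw [hA, hB, hC]; ring
      rw [e1, hphid0, hc2def]
      rw [div_mul_cancel₀ _ hPQ]
      ring
    have hg2 : deriv (deriv g) 0 = 0 := by
      rw [dgfun2 0, hh2, combo_zero]
      have e2 : A*P*P + B*Q*Q + C*R*R = c₁*Wc + c₂*(P^2 - Q^2) := by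
        rw [hA, hB, hC, hWc]; ring
      rw [e2, hc1def, div_mul_cancel₀ _ hWc0]
      ring
    -- g satisfies the ODE on the interval
    have hodeg : ∀ x ∈ Set.Icc (0:ℝ) (LL k l), deriv (deriv (deriv g)) x =
        (P+Q+R) * deriv (deriv g) x - (P*Q+Q*R+R*P) * deriv g x + (P*Q*R) * g x := by
      intro x hx
      rw [dgfun3 x, dgfun2 x, dgfun x, hodeh x]
      have hψx : deriv (deriv (deriv ψ)) x =
          (P+Q+R) * deriv (deriv ψ) x - (P*Q+Q*R+R*P) * deriv ψ x + (P*Q*R) * ψ x := by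
        have h0 := hode x hx
        rw [hσ1, hσ2, hσ3]
        linear_combination h0
      rw [hψx, hg]
      ring
    have hgC : ContDiff ℝ 3 g := hψ.sub ((combo_contDiff A B C P Q R 3))
    have := ode3 P Q R (LL k l) g hgC hodeg hg0 hg1 hg2
    intro x hx
    have hgx := this x hx
    rw [hg] at hgx
    have : ψ x = h x := by linear_combination hgx
    rw [this, hh, hcomb x]
end

section
/- Let k and l be positive integers with 2k + l divisible by 3, and let f := φ' be the derivative of φ. Then f satisfies f'''(x) + f'(x) + i·λ·f(x) = 0 for every x ∈ ℝ, f(0) = f(L) = 0, and f'(0) = f'(L) = 3·k·(k+l)/n, which is a nonzero real number (that is, φ''(0) = φ''(L) = 3k(k+l)/(k²+kl+l²) ≠ 0). -/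
noncomputable section
def myE (r x : ℝ) : ℂ := Complex.exp (Complex.I * r * x)

lemma hasDerivAt_myE (r x : ℝ) :
    HasDerivAt (myE r) (Complex.I * r * myE r x) x := by
  have h : HasDerivAt (fun z : ℂ => Complex.exp (Complex.I * r * z))
      (Complex.exp (Complex.I * r * x) * (Complex.I * r)) (x : ℂ) := by
    simpa using ((hasDerivAt_id (x : ℂ)).const_mul (Complex.I * r)).cexp
  have h2 : HasDerivAt (fun y : ℝ => Complex.exp (Complex.I * r * y))
      (Complex.I * r * Complex.exp (Complex.I * r * x)) x := by
    simpa [mul_comm] using h.comp_ofReal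
  exact h2

lemma deriv3 (a b c : ℂ) (p q r : ℝ) :
    deriv (fun x : ℝ => a * myE p x + b * myE q x + c * myE r x)
      = fun x : ℝ => (a * (Complex.I * p)) * myE p x + (b * (Complex.I * q)) * myE q x
          + (c * (Complex.I * r)) * myE r x := by
  funext x
  have h := (((hasDerivAt_myE p x).const_mul a).add ((hasDerivAt_myE q x).const_mul b)).add
    ((hasDerivAt_myE r x).const_mul c)
  exact h.deriv.trans (by ring)
end

set_option maxHeartbeats 1600000 in
theorem stmt_8 (k l : ℕ) (hk : 0 < k) (hl : 0 < l) (h3 : 3 ∣ 2 * k + l) :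
    (∀ x : ℝ, deriv (deriv (deriv (deriv (phi k l)))) x + deriv (deriv (phi k l)) x
        + Complex.I * ((lam k l : ℝ) : ℂ) * deriv (phi k l) x = 0) ∧
    deriv (phi k l) 0 = 0 ∧ deriv (phi k l) (LL k l) = 0 ∧
    deriv (deriv (phi k l)) 0 = ((3 * (k : ℝ) * ((k : ℝ) + (l : ℝ)) / nR k l : ℝ) : ℂ) ∧
    deriv (deriv (phi k l)) (LL k l) = ((3 * (k : ℝ) * ((k : ℝ) + (l : ℝ)) / nR k l : ℝ) : ℂ) ∧
    ((3 * (k : ℝ) * ((k : ℝ) + (l : ℝ)) / nR k l : ℝ) : ℂ) ≠ 0 := by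
  have hnpos : 0 < nR k l := by unfold nR; positivity
  have hn0 : nR k l ≠ 0 := ne_of_gt hnpos
  set s : ℝ := Real.sqrt (nR k l) with hs_def
  have hspos : 0 < s := Real.sqrt_pos.mpr hnpos
  have hs0 : s ≠ 0 := ne_of_gt hspos
  have hs2 : s ^ 2 = nR k l := Real.sq_sqrt hnpos.le
  have h3pos : (0:ℝ) < Real.sqrt 3 := Real.sqrt_pos.mpr (by norm_num)
  have h30 : Real.sqrt 3 ≠ 0 := ne_of_gt h3pos
  have h3sq : Real.sqrt 3 ^ 2 = 3 := Real.sq_sqrt (by norm_num)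
  obtain ⟨w, hw_def⟩ : ∃ w : ℝ, w = Real.sqrt 3 * s := ⟨_, rfl⟩
  have hw0 : w ≠ 0 := by rw [hw_def]; exact mul_ne_zero h30 hs0
  have hw2 : w ^ 2 = 3 * nR k l := by rw [hw_def, mul_pow, h3sq, hs2]
  obtain ⟨r1, hr1_def⟩ : ∃ r : ℝ, r = (2 * (k:ℝ) + l) / w := ⟨_, rfl⟩
  obtain ⟨r2, hr2_def⟩ : ∃ r : ℝ, r = -((k:ℝ) + 2 * l) / w := ⟨_, rfl⟩
  obtain ⟨r3, hr3_def⟩ : ∃ r : ℝ, r = ((l:ℝ) - k) / w := ⟨_, rfl⟩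
  obtain ⟨c1, hc1_def⟩ : ∃ c : ℂ, c = -1 := ⟨_, rfl⟩
  obtain ⟨c2, hc2_def⟩ : ∃ c : ℂ, c = -((k:ℂ) / l) := ⟨_, rfl⟩
  obtain ⟨c3, hc3_def⟩ : ∃ c : ℂ, c = ((k:ℂ) + l) / l := ⟨_, rfl⟩
  have hlC : (l:ℂ) ≠ 0 := Nat.cast_ne_zero.mpr hl.ne'
  have hwC0 : ((w:ℝ):ℂ) ≠ 0 := Complex.ofReal_ne_zero.mpr hw0
  have hnC0 : ((nR k l : ℝ):ℂ) ≠ 0 := Complex.ofReal_ne_zero.mpr hn0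
  have hr1C : ((r1:ℝ):ℂ) = (2 * (k:ℂ) + l) / (w:ℂ) := by rw [hr1_def]; push_cast; ring
  have hr2C : ((r2:ℝ):ℂ) = -((k:ℂ) + 2 * l) / (w:ℂ) := by rw [hr2_def]; push_cast; ring
  have hr3C : ((r3:ℝ):ℂ) = ((l:ℂ) - k) / (w:ℂ) := by rw [hr3_def]; push_cast; ring
  have hw2C : ((w:ℝ):ℂ)^2 = 3 * ((nR k l : ℝ):ℂ) := by exact_mod_cast congrArg Complex.ofReal hw2
  -- phi in canonical form
  have hphi : phi k l = fun x => c1 * myE r1 x + c2 * myE r2 x + c3 * myE r3 x := by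
    funext x
    simp only [phi, myE, hc1_def, hc2_def, hc3_def]
    have e1 : Complex.I * ((x * (Real.sqrt 3 * ((2 * k + l : ℕ) : ℝ)) / (3 * s) : ℝ) : ℂ)
        = Complex.I * r1 * x := by
      rw [hr1_def, hw_def]
      have h : (2 * (k:ℝ) + l) / (Real.sqrt 3 * s)
          = (Real.sqrt 3 * (2 * (k:ℝ) + l)) / (3 * s) := by
        rw [div_eq_div_iff (by positivity) (by positivity)]
        linear_combination (-(2 * (k:ℝ) + l) * s) * h3sq
      rw [h]; push_cast; ring
    have e2 : -(Complex.I * ((x * (Real.sqrt 3 * ((k + 2 * l : ℕ) : ℝ)) / (3 * s) : ℝ) : ℂ))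
        = Complex.I * r2 * x := by
      rw [hr2_def, hw_def]
      have h : ((k:ℝ) + 2 * l) / (Real.sqrt 3 * s)
          = (Real.sqrt 3 * ((k:ℝ) + 2 * l)) / (3 * s) := by
        rw [div_eq_div_iff (by positivity) (by positivity)]
        linear_combination (-((k:ℝ) + 2 * l) * s) * h3sq
      rw [show -((k:ℝ) + 2 * l) / (Real.sqrt 3 * s) = -(((k:ℝ) + 2 * l) / (Real.sqrt 3 * s)) by ring, h]
      push_cast; ring
    have e3 : Complex.I * ((x * (Real.sqrt 3 * ((l : ℝ) - (k : ℝ))) / (3 * s) : ℝ) : ℂ)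
        = Complex.I * r3 * x := by
      rw [hr3_def, hw_def]
      have h : ((l:ℝ) - k) / (Real.sqrt 3 * s)
          = (Real.sqrt 3 * ((l:ℝ) - k)) / (3 * s) := by
        rw [div_eq_div_iff (by positivity) (by positivity)]
        linear_combination (-((l:ℝ) - k) * s) * h3sq
      rw [h]; push_cast; ring
    rw [e1, e2, e3]; ring
  -- derivatives
  have d1 : deriv (phi k l) = fun x => (c1 * (Complex.I * r1)) * myE r1 x
      + (c2 * (Complex.I * r2)) * myE r2 x + (c3 * (Complex.I * r3)) * myE r3 x := by
    rw [hphi]; exact deriv3 _ _ _ _ _ _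
  have d2 : deriv (deriv (phi k l)) = fun x =>
      (c1 * (Complex.I * r1) * (Complex.I * r1)) * myE r1 x
      + (c2 * (Complex.I * r2) * (Complex.I * r2)) * myE r2 x
      + (c3 * (Complex.I * r3) * (Complex.I * r3)) * myE r3 x := by
    rw [d1]; exact deriv3 _ _ _ _ _ _
  have d3 : deriv (deriv (deriv (phi k l))) = fun x =>
      (c1 * (Complex.I * r1) * (Complex.I * r1) * (Complex.I * r1)) * myE r1 x
      + (c2 * (Complex.I * r2) * (Complex.I * r2) * (Complex.I * r2)) * myE r2 x
      + (c3 * (Complex.I * r3) * (Complex.I * r3) * (Complex.I * r3)) * myE r3 x := by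
    rw [d2]; exact deriv3 _ _ _ _ _ _
  have d4 : deriv (deriv (deriv (deriv (phi k l)))) = fun x =>
      (c1 * (Complex.I * r1) * (Complex.I * r1) * (Complex.I * r1) * (Complex.I * r1)) * myE r1 x
      + (c2 * (Complex.I * r2) * (Complex.I * r2) * (Complex.I * r2) * (Complex.I * r2)) * myE r2 x
      + (c3 * (Complex.I * r3) * (Complex.I * r3) * (Complex.I * r3) * (Complex.I * r3)) * myE r3 x := by
    rw [d3]; exact deriv3 _ _ _ _ _ _
  -- lambda in terms of w
  have hn32 : nR k l ^ ((3:ℝ)/2) = nR k l * s := by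
    rw [show (3:ℝ)/2 = 1 + 1/2 by norm_num, Real.rpow_add hnpos, Real.rpow_one,
      hs_def, Real.sqrt_eq_rpow]
  have hlam : lam k l = (2*(k:ℝ)+l) * ((k:ℝ)-l) * ((k:ℝ)+2*l) / w ^ 3 := by
    unfold lam
    rw [hn32, hw_def]
    push_cast
    rw [div_eq_div_iff (by positivity) (by positivity)]
    have h : (Real.sqrt 3 * s) ^ 3 = 3 * Real.sqrt 3 * (nR k l * s) := by
      rw [mul_pow]
      linear_combination (Real.sqrt 3 * s^3) * h3sq + (3 * Real.sqrt 3 * s) * hs2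
    rw [h]; ring
  -- ODE scalar identities
  have ode : ∀ m : ℝ, (m/w)^3 - m/w = (m^3 - 3 * nR k l * m) / w^3 := by
    intro m
    rw [div_pow, div_sub_div _ _ (pow_ne_zero 3 hw0) hw0,
      div_eq_div_iff (mul_ne_zero (pow_ne_zero 3 hw0) hw0) (pow_ne_zero 3 hw0)]
    linear_combination (-m * w^4) * hw2
  have hP1 : ((2*(k:ℝ)+l)^3 - 3 * nR k l * (2*(k:ℝ)+l))
      = (2*(k:ℝ)+l) * ((k:ℝ)-l) * ((k:ℝ)+2*l) := by unfold nR; push_cast; ring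
  have hP2 : ((-((k:ℝ)+2*l))^3 - 3 * nR k l * (-((k:ℝ)+2*l)))
      = (2*(k:ℝ)+l) * ((k:ℝ)-l) * ((k:ℝ)+2*l) := by unfold nR; push_cast; ring
  have hP3 : (((l:ℝ)-k)^3 - 3 * nR k l * ((l:ℝ)-k))
      = (2*(k:ℝ)+l) * ((k:ℝ)-l) * ((k:ℝ)+2*l) := by unfold nR; push_cast; ring
  have ode1 : r1^3 - r1 = lam k l := by rw [hr1_def, ode, hP1, hlam]
  have ode2 : r2^3 - r2 = lam k l := by rw [hr2_def, ode, hP2, hlam]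
  have ode3 : r3^3 - r3 = lam k l := by rw [hr3_def, ode, hP3, hlam]
  have ode1C : ((r1:ℝ):ℂ)^3 - ((r1:ℝ):ℂ) = ((lam k l : ℝ) : ℂ) := by
    exact_mod_cast congrArg Complex.ofReal ode1
  have ode2C : ((r2:ℝ):ℂ)^3 - ((r2:ℝ):ℂ) = ((lam k l : ℝ) : ℂ) := by
    exact_mod_cast congrArg Complex.ofReal ode2
  have ode3C : ((r3:ℝ):ℂ)^3 - ((r3:ℝ):ℂ) = ((lam k l : ℝ) : ℂ) := by
    exact_mod_cast congrArg Complex.ofReal ode3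
  have hI : (Complex.I)^2 = -1 := Complex.I_sq
  -- values at 0
  have hE0 : ∀ r : ℝ, myE r 0 = 1 := by intro r; simp [myE]
  -- values at L
  have hsdiv : Real.sqrt (nR k l / 3) = s / Real.sqrt 3 := by
    rw [hs_def, ← Real.sqrt_div hnpos.le]
  have hLval : LL k l = 2 * Real.pi * (s / Real.sqrt 3) := by rw [LL, hsdiv]
  have key : ∀ mm : ℝ, (mm / w) * LL k l = (mm / 3) * (2 * Real.pi) := by
    intro mm
    rw [hLval, hw_def]
    field_simp
    ring_nf
    linear_combination (-mm) * h3sq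
  obtain ⟨m, hm⟩ := h3
  have hmr : (2*(k:ℝ)+l) = 3 * m := by exact_mod_cast congrArg (Nat.cast : ℕ → ℝ) hm
  have hEL : ∀ (r : ℝ) (j : ℤ), r * LL k l = j * (2 * Real.pi) → myE r (LL k l) = 1 := by
    intro r j hj
    have h : Complex.I * r * ((LL k l : ℝ) : ℂ) = (j : ℂ) * (2 * Real.pi * Complex.I) := by
      have h2 : ((r * LL k l : ℝ) : ℂ) = (((j:ℝ) * (2 * Real.pi) : ℝ) : ℂ) := by
        exact_mod_cast congrArg Complex.ofReal hj
      push_cast at h2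
      rw [mul_assoc, show ((r:ℝ):ℂ) * ((LL k l : ℝ):ℂ) = (j:ℂ) * (2 * (Real.pi:ℂ)) from h2]
      ring
    rw [myE, h, Complex.exp_int_mul_two_pi_mul_I]
  have hE1L : myE r1 (LL k l) = 1 := by
    apply hEL r1 (m : ℤ)
    rw [hr1_def, key]
    have : (2*(k:ℝ)+l)/3 = (m:ℝ) := by linarith
    rw [this]; push_cast; ring
  have hE2L : myE r2 (LL k l) = 1 := by
    apply hEL r2 ((m : ℤ) - k - l)
    rw [hr2_def, key]
    have : -((k:ℝ)+2*l)/3 = ((m:ℝ) - k - l) := by linarith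
    rw [this]; push_cast; ring
  have hE3L : myE r3 (LL k l) = 1 := by
    apply hEL r3 ((k:ℤ) + l - 2*m)
    rw [hr3_def, key]
    have : ((l:ℝ)-k)/3 = ((k:ℝ) + l - 2*m) := by linarith
    rw [this]; push_cast; ring
  have cancel : ∀ (c : ℂ) (r : ℝ), (r:ℂ)^3 - (r:ℂ) = ((lam k l : ℝ):ℂ) →
      c * (Complex.I * r) * (Complex.I * r) * (Complex.I * r) * (Complex.I * r)
        + c * (Complex.I * r) * (Complex.I * r)
        + Complex.I * ((lam k l : ℝ):ℂ) * (c * (Complex.I * r)) = 0 := by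
    intro c r h
    linear_combination (c * Complex.I^2 * (r:ℂ)^4) * hI - (c * Complex.I^2 * (r:ℂ)) * h
  have val2 : c1 * (Complex.I * (r1:ℝ)) * (Complex.I * (r1:ℝ))
      + c2 * (Complex.I * (r2:ℝ)) * (Complex.I * (r2:ℝ))
      + c3 * (Complex.I * (r3:ℝ)) * (Complex.I * (r3:ℝ))
      = ((3 * (k : ℝ) * ((k : ℝ) + (l : ℝ)) / nR k l : ℝ) : ℂ) := by
    have step : ∀ (c a : ℂ), c * (Complex.I * a) * (Complex.I * a) = -(c * a ^ 2) := by
      intro c a; linear_combination (c * a ^ 2) * hI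
    rw [step, step, step, hc1_def, hc2_def, hc3_def, hr1C, hr2C, hr3C]
    push_cast
    field_simp [hlC, hwC0, hnC0]
    linear_combination (-3*(l:ℂ)*(k:ℂ)*((k:ℂ)+l)) * hw2C
  refine ⟨?_, ?_, ?_, ?_, ?_, ?_⟩
  · -- ODE
    intro x
    simp only [d4]; simp only [d2]; simp only [d1]
    linear_combination (myE r1 x) * (cancel c1 r1 ode1C) + (myE r2 x) * (cancel c2 r2 ode2C)
      + (myE r3 x) * (cancel c3 r3 ode3C)
  · simp only [d1, hE0, mul_one, hc1_def, hc2_def, hc3_def, hr1C, hr2C, hr3C]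
    field_simp
    ring
  · simp only [d1, hE1L, hE2L, hE3L, mul_one, hc1_def, hc2_def, hc3_def, hr1C, hr2C, hr3C]
    field_simp
    ring
  · rw [d2]
    simp only [hE0, mul_one]
    exact val2
  · rw [d2]
    simp only [hE1L, hE2L, hE3L, mul_one]
    exact val2
  · rw [Complex.ofReal_ne_zero]
    have : (0:ℝ) < 3 * (k : ℝ) * ((k : ℝ) + (l : ℝ)) / nR k l := by positivity
    exact ne_of_gt this
end

section
/- Let k and l be positive integers with k ≠ l. Then η₁, η₂, η₃ are pairwise distinct, nonzero, purely imaginary complex numbers satisfying η_j³ + η_j = i·p for j = 1,2,3 (equivalently, (X−η₁)(X−η₂)(X−η₃) = X³ + X − i·p as polynomials over ℂ); moreover, if k ≡ l (mod 3), then exp(η_j·L) = 1 for j = 1,2,3. -/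
noncomputable section

/-- `p = (2k+l)(k−l)(2l+k)/(3√3 n^{3/2})`. -/
def pK (k l : ℕ) : ℝ :=
  ((2 * k + l : ℕ) : ℝ) * ((k : ℝ) - (l : ℝ)) * ((2 * l + k : ℕ) : ℝ) /
    (3 * Real.sqrt 3 * nR k l ^ ((3 : ℝ) / 2))

/-- `η₁ = −(2πi/(3L))·(2k+l)`. -/
def eta1 (k l : ℕ) : ℂ :=
  -(2 * (Real.pi : ℂ) * Complex.I / (3 * ((LL k l : ℝ) : ℂ))) * ((2 * k + l : ℕ) : ℂ)

/-- `η₂ = η₁ + 2πi·k/L`. -/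
def eta2 (k l : ℕ) : ℂ :=
  eta1 k l + 2 * (Real.pi : ℂ) * Complex.I * (k : ℂ) / ((LL k l : ℝ) : ℂ)

/-- `η₃ = η₂ + 2πi·l/L`. -/
def eta3 (k l : ℕ) : ℂ :=
  eta2 k l + 2 * (Real.pi : ℂ) * Complex.I * (l : ℂ) / ((LL k l : ℝ) : ℂ)

end

section AuxStmt9

private lemma stmt9_nR_pos (k l : ℕ) (hk : 0 < k) : 0 < nR k l := by
  unfold nR; positivity

private lemma stmt9_LL_pos (k l : ℕ) (hk : 0 < k) : 0 < LL k l := by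
  unfold LL
  have := stmt9_nR_pos k l hk
  positivity

private lemma stmt9_A_eq (k l : ℕ) (hk : 0 < k) (c : ℝ) :
    2 * Real.pi * c / LL k l = Real.sqrt 3 * c / Real.sqrt (nR k l) := by
  have hn := stmt9_nR_pos k l hk
  have hpi := Real.pi_pos
  have hsn : (0:ℝ) < Real.sqrt (nR k l) := Real.sqrt_pos.2 hn
  have hs3 : (0:ℝ) < Real.sqrt 3 := by positivity
  have h3 : Real.sqrt (nR k l / 3) = Real.sqrt (nR k l) / Real.sqrt 3 :=
    Real.sqrt_div hn.le 3
  rw [LL, h3]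
  field_simp

private lemma stmt9_rep1 (k l : ℕ) (hk : 0 < k) :
    eta1 k l = Complex.I * ((2 * Real.pi * (-(2*(k:ℝ)+l)/3) / LL k l : ℝ) : ℂ) := by
  have hL : ((LL k l : ℝ) : ℂ) ≠ 0 := by exact_mod_cast (stmt9_LL_pos k l hk).ne'
  rw [eta1]; push_cast; field_simp

private lemma stmt9_rep2 (k l : ℕ) (hk : 0 < k) :
    eta2 k l = Complex.I * ((2 * Real.pi * (((k:ℝ)-l)/3) / LL k l : ℝ) : ℂ) := by
  have hL : ((LL k l : ℝ) : ℂ) ≠ 0 := by exact_mod_cast (stmt9_LL_pos k l hk).ne'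
  rw [eta2, stmt9_rep1 k l hk]; push_cast; field_simp; ring

private lemma stmt9_rep3 (k l : ℕ) (hk : 0 < k) :
    eta3 k l = Complex.I * ((2 * Real.pi * (((k:ℝ)+2*l)/3) / LL k l : ℝ) : ℂ) := by
  have hL : ((LL k l : ℝ) : ℂ) ≠ 0 := by exact_mod_cast (stmt9_LL_pos k l hk).ne'
  rw [eta3, stmt9_rep2 k l hk]; push_cast; field_simp; ring

private lemma stmt9_cube (a : ℝ) :
    (Complex.I * (a:ℂ))^3 + Complex.I*(a:ℂ) = Complex.I * ((a - a^3 : ℝ):ℂ) := by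
  push_cast
  linear_combination ((a:ℂ)^3 * Complex.I) * Complex.I_sq

private lemma stmt9_rpow32 (x : ℝ) (hx : 0 ≤ x) : x ^ ((3:ℝ)/2) = Real.sqrt x ^ 3 := by
  rw [Real.sqrt_eq_rpow, ← Real.rpow_natCast (x ^ ((1:ℝ)/2)) 3, ← Real.rpow_mul hx]
  norm_num

private lemma stmt9_keyid (nn num c : ℝ) (hnn : 0 < nn) (hnum : 9*c*nn - 27*c^3 = num) :
    Real.sqrt 3 * c / Real.sqrt nn - (Real.sqrt 3 * c / Real.sqrt nn)^3
      = num / (3 * Real.sqrt 3 * Real.sqrt nn ^ 3) := by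
  have hs3 : Real.sqrt 3 ^ 2 = 3 := Real.sq_sqrt (by norm_num)
  have hsn : Real.sqrt nn ^ 2 = nn := Real.sq_sqrt hnn.le
  have h3 : Real.sqrt 3 ≠ 0 := by positivity
  have hn : Real.sqrt nn ≠ 0 := by positivity
  field_simp
  set s3 := Real.sqrt 3
  set sn := Real.sqrt nn
  linear_combination (3*c*sn^2 - 3*c^3*(s3^2+3)) * hs3 + (9*c) * hsn + hnum

/-- `η³ + η = i·p` given the representation and the integer identity. -/
private lemma stmt9_cubic (k l : ℕ) (hk : 0 < k) (c : ℝ) (e : ℂ)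
    (he : e = Complex.I * ((2 * Real.pi * c / LL k l : ℝ) : ℂ))
    (hnum : 9*c*(nR k l) - 27*c^3
      = ((2 * k + l : ℕ) : ℝ) * ((k : ℝ) - (l : ℝ)) * ((2 * l + k : ℕ) : ℝ)) :
    e ^ 3 + e = Complex.I * ((pK k l : ℝ) : ℂ) := by
  rw [he, stmt9_cube]
  congr 1
  norm_cast
  rw [stmt9_A_eq k l hk c, pK, stmt9_rpow32 _ (stmt9_nR_pos k l hk).le]
  exact stmt9_keyid (nR k l) _ c (stmt9_nR_pos k l hk) hnum

private lemma stmt9_inj (k l : ℕ) (hk : 0 < k) {c d : ℝ}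
    (h : Complex.I * ((2 * Real.pi * c / LL k l : ℝ) : ℂ)
       = Complex.I * ((2 * Real.pi * d / LL k l : ℝ) : ℂ)) : c = d := by
  have hL := stmt9_LL_pos k l hk
  have hpi := Real.pi_pos
  have h2 : (2 * Real.pi * c / LL k l : ℝ) = 2 * Real.pi * d / LL k l := by
    have := mul_left_cancel₀ Complex.I_ne_zero h
    exact_mod_cast this
  have key : ∀ x : ℝ, (2 * Real.pi * x / LL k l) * (LL k l / (2 * Real.pi)) = x := by
    intro x; field_simp
  rw [← key c, ← key d, h2]

private lemma stmt9_ne_zero (k l : ℕ) (hk : 0 < k) {c : ℝ} (hc : c ≠ 0) :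
    Complex.I * ((2 * Real.pi * c / LL k l : ℝ) : ℂ) ≠ 0 := by
  have hL := stmt9_LL_pos k l hk
  have hpi := Real.pi_pos
  refine mul_ne_zero Complex.I_ne_zero ?_
  rw [Complex.ofReal_ne_zero]
  positivity

end AuxStmt9

theorem stmt_9 (k l : ℕ) (hk : 0 < k) (hl : 0 < l) (hkl : k ≠ l) :
    (eta1 k l ≠ eta2 k l ∧ eta1 k l ≠ eta3 k l ∧ eta2 k l ≠ eta3 k l) ∧
    (eta1 k l ≠ 0 ∧ eta2 k l ≠ 0 ∧ eta3 k l ≠ 0) ∧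
    ((eta1 k l).re = 0 ∧ (eta2 k l).re = 0 ∧ (eta3 k l).re = 0) ∧
    (eta1 k l ^ 3 + eta1 k l = Complex.I * ((pK k l : ℝ) : ℂ) ∧
     eta2 k l ^ 3 + eta2 k l = Complex.I * ((pK k l : ℝ) : ℂ) ∧
     eta3 k l ^ 3 + eta3 k l = Complex.I * ((pK k l : ℝ) : ℂ)) ∧
    (k ≡ l [MOD 3] →
      Complex.exp (eta1 k l * ((LL k l : ℝ) : ℂ)) = 1 ∧
      Complex.exp (eta2 k l * ((LL k l : ℝ) : ℂ)) = 1 ∧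
      Complex.exp (eta3 k l * ((LL k l : ℝ) : ℂ)) = 1) := by
  have hkR : (0:ℝ) < k := by exact_mod_cast hk
  have hlR : (0:ℝ) < l := by exact_mod_cast hl
  have hklR : (k:ℝ) ≠ l := by exact_mod_cast hkl
  have r1 := stmt9_rep1 k l hk
  have r2 := stmt9_rep2 k l hk
  have r3 := stmt9_rep3 k l hk
  have hL := stmt9_LL_pos k l hk
  have hLc : ((LL k l : ℝ) : ℂ) ≠ 0 := by exact_mod_cast hL.ne'
  refine ⟨⟨?_, ?_, ?_⟩, ⟨?_, ?_, ?_⟩, ⟨?_, ?_, ?_⟩, ⟨?_, ?_, ?_⟩, ?_⟩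
  · rw [r1, r2]; intro h; have := stmt9_inj k l hk h; linarith
  · rw [r1, r3]; intro h; have := stmt9_inj k l hk h; linarith
  · rw [r2, r3]; intro h; have := stmt9_inj k l hk h; linarith
  · rw [r1]; exact stmt9_ne_zero k l hk (by intro h; nlinarith)
  · rw [r2]; exact stmt9_ne_zero k l hk (by intro h; apply hklR; linarith)
  · rw [r3]; exact stmt9_ne_zero k l hk (by intro h; nlinarith)
  · rw [r1]; simp
  · rw [r2]; simp
  · rw [r3]; simp
  · exact stmt9_cubic k l hk _ _ r1 (by unfold nR; push_cast; ring)
  · exact stmt9_cubic k l hk _ _ r2 (by unfold nR; push_cast; ring)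
  · exact stmt9_cubic k l hk _ _ r3 (by unfold nR; push_cast; ring)
  · intro hmod
    have h3 : (2 * k + l) % 3 = 0 := by
      have : k % 3 = l % 3 := hmod
      omega
    obtain ⟨m, hm⟩ := Nat.dvd_of_mod_eq_zero h3
    have e1 : eta1 k l * ((LL k l : ℝ) : ℂ) = ((-(m:ℤ) : ℤ) : ℂ) * (2 * Real.pi * Complex.I) := by
      rw [eta1]
      have : ((2 * k + l : ℕ) : ℂ) = 3 * (m : ℂ) := by exact_mod_cast congrArg (Nat.cast (R := ℂ)) hm
      rw [this]
      push_cast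
      field_simp
    have e2 : eta2 k l * ((LL k l : ℝ) : ℂ)
        = (((k : ℤ) - m : ℤ) : ℂ) * (2 * Real.pi * Complex.I) := by
      rw [eta2, add_mul, e1]
      push_cast
      field_simp
      ring
    have e3 : eta3 k l * ((LL k l : ℝ) : ℂ)
        = (((k : ℤ) + l - m : ℤ) : ℂ) * (2 * Real.pi * Complex.I) := by
      rw [eta3, add_mul, e2]
      push_cast
      field_simp
      ring
    exact ⟨by rw [e1, Complex.exp_int_mul_two_pi_mul_I],
           by rw [e2, Complex.exp_int_mul_two_pi_mul_I],
           by rw [e3, Complex.exp_int_mul_two_pi_mul_I]⟩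
end

section
/- Let k and l be positive integers with k ≠ l and k ≡ l (mod 3). Then, with cyclic indexing (η₄ := η₁, η₅ := η₂), one has Σ_{j=1}^{3} (η_{j+1} − η_j)/η_{j+2} = −27·k·l·(k+l)/((k+2l)·(2k+l)·(k−l)), and consequently E := (p²·L/9) · Σ_{j=1}^{3} (η_{j+1} − η_j)/η_{j+2} = −8π³·p·k·l·(k+l)/(9·L²), which is nonzero. -/
theorem stmt_11 (k l : ℕ) (hk : 0 < k) (hl : 0 < l) (hne : k ≠ l) (hmod : k ≡ l [MOD 3]) :
    (eta2 k l - eta1 k l) / eta3 k l + (eta3 k l - eta2 k l) / eta1 k l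
        + (eta1 k l - eta3 k l) / eta2 k l =
      ((-27 * (k : ℝ) * (l : ℝ) * ((k : ℝ) + (l : ℝ)) /
          (((k : ℝ) + 2 * (l : ℝ)) * (2 * (k : ℝ) + (l : ℝ)) * ((k : ℝ) - (l : ℝ))) : ℝ) : ℂ) ∧
    (((pK k l) ^ 2 * LL k l / 9 : ℝ) : ℂ) *
        ((eta2 k l - eta1 k l) / eta3 k l + (eta3 k l - eta2 k l) / eta1 k l
          + (eta1 k l - eta3 k l) / eta2 k l) =
      ((-8 * Real.pi ^ 3 * pK k l * (k : ℝ) * (l : ℝ) * ((k : ℝ) + (l : ℝ)) /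
          (9 * (LL k l) ^ 2) : ℝ) : ℂ) ∧
    (((pK k l) ^ 2 * LL k l / 9 : ℝ) : ℂ) *
        ((eta2 k l - eta1 k l) / eta3 k l + (eta3 k l - eta2 k l) / eta1 k l
          + (eta1 k l - eta3 k l) / eta2 k l) ≠ 0 := by
  have hnpos : (0:ℝ) < nR k l := by
    have : 0 < k ^ 2 + k * l + l ^ 2 := by positivity
    unfold nR; exact_mod_cast this
  have hsqpos : 0 < Real.sqrt (nR k l / 3) := Real.sqrt_pos.mpr (by linarith)
  have hLpos : 0 < LL k l := by
    unfold LL; positivity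
  have hLC : ((LL k l : ℝ) : ℂ) ≠ 0 := Complex.ofReal_ne_zero.mpr hLpos.ne'
  have hklR : (k:ℝ) ≠ (l:ℝ) := by exact_mod_cast hne
  have hklC : (k:ℂ) ≠ (l:ℂ) := by exact_mod_cast hne
  have hπ : (Real.pi : ℂ) ≠ 0 := Complex.ofReal_ne_zero.mpr Real.pi_ne_zero
  set c : ℂ := 2 * (Real.pi:ℂ) * Complex.I / (3 * ((LL k l : ℝ):ℂ)) with hc
  have hcne : c ≠ 0 := by
    rw [hc]
    apply div_ne_zero
    · exact mul_ne_zero (mul_ne_zero two_ne_zero hπ) Complex.I_ne_zero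
    · exact mul_ne_zero three_ne_zero hLC
  have hkC : (0:ℂ) ≠ (k:ℂ) := by
    have : (k:ℕ) ≠ 0 := hk.ne'
    exact_mod_cast this.symm
  have hlC : (0:ℂ) ≠ (l:ℂ) := by
    have : (l:ℕ) ≠ 0 := hl.ne'
    exact_mod_cast this.symm
  have hA : 2*(k:ℂ) + (l:ℂ) ≠ 0 := by
    have h0 : ((2*k+l:ℕ):ℂ) ≠ 0 := Nat.cast_ne_zero.mpr (by omega)
    push_cast at h0; exact h0
  have hB : (k:ℂ) - (l:ℂ) ≠ 0 := sub_ne_zero.mpr hklC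
  have hC : (k:ℂ) + 2*(l:ℂ) ≠ 0 := by
    have h0 : ((k+2*l:ℕ):ℂ) ≠ 0 := Nat.cast_ne_zero.mpr (by omega)
    push_cast at h0; exact h0
  have h1 : eta1 k l = -c * (2*(k:ℂ) + (l:ℂ)) := by
    rw [eta1]; push_cast; ring
  have h2 : eta2 k l = c * ((k:ℂ) - (l:ℂ)) := by
    rw [eta2, h1, hc]; field_simp; ring
  have h3 : eta3 k l = c * ((k:ℂ) + 2*(l:ℂ)) := by
    rw [eta3, h2, hc]; field_simp; ring
  have heq1 : (eta2 k l - eta1 k l) / eta3 k l + (eta3 k l - eta2 k l) / eta1 k l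
        + (eta1 k l - eta3 k l) / eta2 k l =
      ((-27 * (k : ℝ) * (l : ℝ) * ((k : ℝ) + (l : ℝ)) /
          (((k : ℝ) + 2 * (l : ℝ)) * (2 * (k : ℝ) + (l : ℝ)) * ((k : ℝ) - (l : ℝ))) : ℝ) : ℂ) := by
    rw [h1, h2, h3]
    push_cast
    rw [div_add_div _ _ (mul_ne_zero hcne hC) (mul_ne_zero (neg_ne_zero.mpr hcne) hA),
      div_add_div _ _ (mul_ne_zero (mul_ne_zero hcne hC) (mul_ne_zero (neg_ne_zero.mpr hcne) hA))
        (mul_ne_zero hcne hB), div_eq_div_iff (mul_ne_zero (mul_ne_zero (mul_ne_zero hcne hC)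
        (mul_ne_zero (neg_ne_zero.mpr hcne) hA)) (mul_ne_zero hcne hB)) (mul_ne_zero (mul_ne_zero hC hA) hB)]
    ring
  -- real algebra for the second identity
  set a := Real.sqrt 3 with ha
  set b := Real.sqrt (nR k l) with hb
  have ha2 : a ^ 2 = 3 := Real.sq_sqrt (by norm_num)
  have hb2 : b ^ 2 = nR k l := Real.sq_sqrt hnpos.le
  have hapos : 0 < a := Real.sqrt_pos.mpr (by norm_num)
  have hbpos : 0 < b := Real.sqrt_pos.mpr hnpos
  have hrp : nR k l ^ ((3:ℝ)/2) = nR k l * b := by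
    rw [show (3:ℝ)/2 = 1 + 1/2 by norm_num, Real.rpow_add hnpos, Real.rpow_one,
      show (1:ℝ)/2 = 2⁻¹ by norm_num]
    congr 1
    rw [hb, Real.sqrt_eq_rpow]
    norm_num
  have hsd : Real.sqrt (nR k l / 3) = b / a := by
    rw [hb, ha, ← Real.sqrt_div hnpos.le]
  have hpL : 27 * pK k l * (LL k l) ^ 3
      = 8 * Real.pi ^ 3 * (((2*k+l:ℕ):ℝ) * ((k:ℝ) - (l:ℝ)) * ((2*l+k:ℕ):ℝ)) := by
    rw [pK, LL, hsd, hrp, ← hb2]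
    have ha4 : Real.sqrt 3 ^ 4 = 9 := by
      rw [show 4 = 2 * 2 from rfl, pow_mul, Real.sq_sqrt (by norm_num : (0:ℝ) ≤ 3)]
      norm_num
    field_simp
    ring_nf
    rw [← ha]
    have ha4' : a ^ 4 = 9 := by rw [ha]; exact ha4
    linear_combination (-24) * ha4'
  push_cast at hpL
  have hkR : (0:ℝ) < (k:ℝ) := by exact_mod_cast hk
  have hlR : (0:ℝ) < (l:ℝ) := by exact_mod_cast hl
  have hAR : 2*(k:ℝ) + (l:ℝ) ≠ 0 := by positivity
  have hBR : (k:ℝ) - (l:ℝ) ≠ 0 := sub_ne_zero.mpr hklR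
  have hCR : (k:ℝ) + 2*(l:ℝ) ≠ 0 := by positivity
  have heq2R : pK k l ^ 2 * LL k l / 9 *
        (-27 * (k : ℝ) * (l : ℝ) * ((k : ℝ) + (l : ℝ)) /
          (((k : ℝ) + 2 * (l : ℝ)) * (2 * (k : ℝ) + (l : ℝ)) * ((k : ℝ) - (l : ℝ))))
      = -8 * Real.pi ^ 3 * pK k l * (k : ℝ) * (l : ℝ) * ((k : ℝ) + (l : ℝ)) /
          (9 * (LL k l) ^ 2) := by
    have hpval : pK k l = 8 * Real.pi ^ 3 * ((2*(k:ℝ)+(l:ℝ)) * ((k:ℝ)-(l:ℝ)) * (2*(l:ℝ)+(k:ℝ)))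
        / (27 * LL k l ^ 3) := by
      rw [eq_div_iff (by positivity)]
      linear_combination hpL
    rw [hpval]
    field_simp
    ring
  have heq2 : (((pK k l) ^ 2 * LL k l / 9 : ℝ) : ℂ) *
        ((eta2 k l - eta1 k l) / eta3 k l + (eta3 k l - eta2 k l) / eta1 k l
          + (eta1 k l - eta3 k l) / eta2 k l) =
      ((-8 * Real.pi ^ 3 * pK k l * (k : ℝ) * (l : ℝ) * ((k : ℝ) + (l : ℝ)) /
          (9 * (LL k l) ^ 2) : ℝ) : ℂ) := by
    rw [heq1, ← Complex.ofReal_mul, heq2R]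
  have hp : pK k l ≠ 0 := by
    rw [pK]
    apply div_ne_zero
    · apply mul_ne_zero (mul_ne_zero _ hBR)
      · exact Nat.cast_ne_zero.mpr (by omega)
      · exact Nat.cast_ne_zero.mpr (by omega)
    · have : 0 < nR k l ^ ((3:ℝ)/2) := Real.rpow_pos_of_pos hnpos _
      positivity
  have hfin : -8 * Real.pi ^ 3 * pK k l * (k : ℝ) * (l : ℝ) * ((k : ℝ) + (l : ℝ)) /
      (9 * (LL k l) ^ 2) ≠ 0 := by
    apply div_ne_zero
    · apply mul_ne_zero (mul_ne_zero (mul_ne_zero (mul_ne_zero _ hp) hkR.ne') hlR.ne')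
        (by positivity)
      have := Real.pi_ne_zero
      positivity
    · positivity
  exact ⟨heq1, heq2, by rw [heq2]; exact Complex.ofReal_ne_zero.mpr hfin⟩
end
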